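/- arXiv:2409.14528 — 4 statements merged into one kernel-verified Lean document; each statement's English description precedes it below -/
import Mathlib

section
/- Let G be a connected loopless MP-digraph that is not a coherently oriented cycle, and suppose that G has a unique dynamical module (equal to G itself). Then G is a sink or a source. -/
set_option autoImplicit false

noncomputable section

attribute [local instance] Classical.propDecidable

/-- A (finite) directed multigraph: finitely many vertices and edges, each edge
has a source and a target.  (Loops and, a priori, parallel edges are allowed;
the paper's convention of at most one edge between an ordered pair of distinct
vertices is imposed via `DiGraph.EdgeUnique`.) -/
structure DiGraph where
  V : Type
  E : Type
  [fintV : Fintype V]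
  [decV : DecidableEq V]
  [fintE : Fintype E]
  [decE : DecidableEq E]
  s : E → V
  t : E → V

attribute [instance] DiGraph.fintV DiGraph.decV DiGraph.fintE DiGraph.decE

namespace DiGraph

/-- For each ordered pair of *distinct* vertices there is at most one edge. -/
def EdgeUnique (G : DiGraph) : Prop :=
  ∀ e f : G.E, G.s e = G.s f → G.t e = G.t f → G.s e ≠ G.t e → e = f

/-- G has no loops. -/
def Loopless (G : DiGraph) : Prop := ∀ e : G.E, G.s e ≠ G.t e

/-- A coherently oriented cycle, given as the (cyclically ordered) list of its
edges: the list is nonempty, has no repeated edges, visits no vertex twice,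
and the target of each edge is the source of the next one (cyclically).
A loop is a coherently oriented cycle of length 1. -/
def IsCohCycle (G : DiGraph) (c : List G.E) : Prop :=
  c ≠ [] ∧ c.Nodup ∧ (c.map G.s).Nodup ∧
    ∀ i : Fin c.length,
      G.t (c.get i) =
        G.s (c.get ⟨(i.val + 1) % c.length,
          Nat.mod_lt _ (Nat.lt_of_le_of_lt (Nat.zero_le _) i.isLt)⟩)

/-- `m` is (the edge set of) a multipath of `G`: the corresponding spanning
subgraph has no loops, in-degree and out-degree at most one at each vertex, and
contains no coherently oriented cycle; equivalently, every connected component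
is a single vertex or a simple (directed) path. -/
def IsMultipath (G : DiGraph) (m : Finset G.E) : Prop :=
  (∀ e ∈ m, G.s e ≠ G.t e) ∧
  (∀ e ∈ m, ∀ f ∈ m, G.s e = G.s f → e = f) ∧
  (∀ e ∈ m, ∀ f ∈ m, G.t e = G.t f → e = f) ∧
  ¬∃ c : List G.E, IsCohCycle G c ∧ ∀ g ∈ c, g ∈ m

/-- The forbidden pattern (A): vertices v0,v1,v2 and edges (v1,v0), (v0,v2), (v1,v2). -/
def HasPatternA (G : DiGraph) : Prop :=
  ∃ v0 v1 v2 : G.V, v0 ≠ v1 ∧ v0 ≠ v2 ∧ v1 ≠ v2 ∧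
    (∃ e : G.E, G.s e = v1 ∧ G.t e = v0) ∧
    (∃ e : G.E, G.s e = v0 ∧ G.t e = v2) ∧
    (∃ e : G.E, G.s e = v1 ∧ G.t e = v2)

/-- The reverse of pattern (A). -/
def HasPatternArev (G : DiGraph) : Prop :=
  ∃ v0 v1 v2 : G.V, v0 ≠ v1 ∧ v0 ≠ v2 ∧ v1 ≠ v2 ∧
    (∃ e : G.E, G.s e = v0 ∧ G.t e = v1) ∧
    (∃ e : G.E, G.s e = v2 ∧ G.t e = v0) ∧
    (∃ e : G.E, G.s e = v2 ∧ G.t e = v1)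

/-- The forbidden pattern (B): vertices v0,v1,v2,v3 and edges (v0,v1), (v2,v1), (v2,v3). -/
def HasPatternB (G : DiGraph) : Prop :=
  ∃ v0 v1 v2 v3 : G.V,
    v0 ≠ v1 ∧ v0 ≠ v2 ∧ v0 ≠ v3 ∧ v1 ≠ v2 ∧ v1 ≠ v3 ∧ v2 ≠ v3 ∧
    (∃ e : G.E, G.s e = v0 ∧ G.t e = v1) ∧
    (∃ e : G.E, G.s e = v2 ∧ G.t e = v1) ∧
    (∃ e : G.E, G.s e = v2 ∧ G.t e = v3)

/-- The reverse of pattern (B). -/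
def HasPatternBrev (G : DiGraph) : Prop :=
  ∃ v0 v1 v2 v3 : G.V,
    v0 ≠ v1 ∧ v0 ≠ v2 ∧ v0 ≠ v3 ∧ v1 ≠ v2 ∧ v1 ≠ v3 ∧ v2 ≠ v3 ∧
    (∃ e : G.E, G.s e = v1 ∧ G.t e = v0) ∧
    (∃ e : G.E, G.s e = v1 ∧ G.t e = v2) ∧
    (∃ e : G.E, G.s e = v3 ∧ G.t e = v2)

/-- (MP1): G contains no copy, up to reversing all orientations, of the
patterns (A) and (B). -/
def MP1 (G : DiGraph) : Prop :=
  ¬HasPatternA G ∧ ¬HasPatternArev G ∧ ¬HasPatternB G ∧ ¬HasPatternBrev G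

/-- (MP2): every coherently oriented cycle of length ≥ 2 (i.e. loops excluded)
is a connected component: any edge incident to a vertex of the cycle belongs
to the cycle. -/
def MP2 (G : DiGraph) : Prop :=
  ∀ c : List G.E, IsCohCycle G c → 2 ≤ c.length →
    ∀ f : G.E, (∃ g ∈ c, G.s g = G.s f ∨ G.s g = G.t f) → f ∈ c

def IsMPDigraph (G : DiGraph) : Prop := MP1 G ∧ MP2 G

/-- The axioms (I1), (I2), (I3) for a family of independent sets of a matroid. -/
def IsIndepFamily {α : Type} [DecidableEq α] (I : Finset α → Prop) : Prop :=
  I ∅ ∧ (∀ A B : Finset α, I A → B ⊆ A → I B) ∧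
    ∀ A B : Finset α, I A → I B → B.card < A.card →
      ∃ x ∈ A, x ∉ B ∧ I (insert x B)

/-- `m` is the edge set of a linear sink (two non-loop edges with a common
target and distinct sources). -/
def IsLinearSinkSet (G : DiGraph) (m : Finset G.E) : Prop :=
  ∃ e1 e2 : G.E, e1 ≠ e2 ∧ m = {e1, e2} ∧ G.t e1 = G.t e2 ∧
    G.s e1 ≠ G.s e2 ∧ G.s e1 ≠ G.t e1 ∧ G.s e2 ≠ G.t e2

/-- `m` is the edge set of a linear source (two non-loop edges with a common
source and distinct targets). -/
def IsLinearSourceSet (G : DiGraph) (m : Finset G.E) : Prop :=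
  ∃ e1 e2 : G.E, e1 ≠ e2 ∧ m = {e1, e2} ∧ G.s e1 = G.s e2 ∧
    G.t e1 ≠ G.t e2 ∧ G.s e1 ≠ G.t e1 ∧ G.s e2 ≠ G.t e2

/-- `m` is the edge set of a coherently oriented cycle (possibly a loop). -/
def IsCohCycleSet (G : DiGraph) (m : Finset G.E) : Prop :=
  ∃ c : List G.E, IsCohCycle G c ∧ m = c.toFinset

/-- Two vertices are adjacent if they are the endpoints of a common edge. -/
def adj (G : DiGraph) (v w : G.V) : Prop :=
  ∃ e : G.E, (G.s e = v ∧ G.t e = w) ∨ (G.s e = w ∧ G.t e = v)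

/-- Two vertices lie in the same connected component. -/
def connRel (G : DiGraph) : G.V → G.V → Prop := Relation.EqvGen (adj G)

/-- G is connected. -/
def ConnectedD (G : DiGraph) : Prop := Nonempty G.V ∧ ∀ v w : G.V, connRel G v w

/-- The number of connected components of G (isolated vertices count). -/
def numComponents (G : DiGraph) : ℕ :=
  Nat.card (Quotient (Relation.EqvGen.setoid (adj G)))

/-- `S` is the set of edges of one of the connected components of `G`. -/
def IsComponentEdges (G : DiGraph) (S : Finset G.E) : Prop :=
  ∃ v : G.V, S = Finset.univ.filter (fun e => connRel G v (G.s e))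

/-- in-degree of `v` in the subgraph spanned by the edges of `R`. -/
def indegIn (G : DiGraph) (R : Finset G.E) (v : G.V) : ℕ :=
  (R.filter (fun e => G.t e = v)).card

/-- out-degree of `v` in the subgraph spanned by the edges of `R`. -/
def outdegIn (G : DiGraph) (R : Finset G.E) (v : G.V) : ℕ :=
  (R.filter (fun e => G.s e = v)).card

def indeg (G : DiGraph) (v : G.V) : ℕ := indegIn G Finset.univ v
def outdeg (G : DiGraph) (v : G.V) : ℕ := outdegIn G Finset.univ v

/-- `v` is a vertex of the subgraph spanned by the edge set `R`. -/
def IncidentTo (G : DiGraph) (R : Finset G.E) (v : G.V) : Prop :=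
  ∃ e ∈ R, G.s e = v ∨ G.t e = v

/-- `v` is stable in the subgraph spanned by `R`. -/
def StableIn (G : DiGraph) (R : Finset G.E) (v : G.V) : Prop :=
  indegIn G R v = 0 ∨ outdegIn G R v = 0

/-- `v` is unstable in `G`. -/
def UnstableG (G : DiGraph) (v : G.V) : Prop :=
  0 < indeg G v ∧ 0 < outdeg G v

/-- adjacency within the subgraph spanned by `R`. -/
def adjIn (G : DiGraph) (R : Finset G.E) (a b : G.V) : Prop :=
  ∃ g ∈ R, (G.s g = a ∧ G.t g = b) ∨ (G.s g = b ∧ G.t g = a)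

/-- The subgraph spanned by the edge set `R` is connected. -/
def EdgeConnected (G : DiGraph) (R : Finset G.E) : Prop :=
  ∀ e ∈ R, ∀ f ∈ R, Relation.EqvGen (adjIn G R) (G.s e) (G.s f)

/-- `R` spans a dynamical region of `G`: it is connected, has at least one
edge, every boundary vertex is unstable in `G` but stable in `R` and in its
complement, and no edge of `R` lies on an oriented cycle of `G` not contained
in `R`. -/
def IsDynRegion (G : DiGraph) (R : Finset G.E) : Prop :=
  R.Nonempty ∧ EdgeConnected G R ∧
  (∀ v : G.V, IncidentTo G R v → IncidentTo G (Finset.univ \ R) v →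
     UnstableG G v ∧ StableIn G R v ∧ StableIn G (Finset.univ \ R) v) ∧
  (∀ c : List G.E, IsCohCycle G c → (∃ g ∈ c, g ∈ R) → ∀ g ∈ c, g ∈ R)

/-- A dynamical module is a minimal dynamical region. -/
def IsDynModule (G : DiGraph) (R : Finset G.E) : Prop :=
  IsDynRegion G R ∧ ∀ R' ⊆ R, IsDynRegion G R' → R' = R

/-- `G` is a sink on `n+1` vertices. -/
def IsSinkGraph (G : DiGraph) : Prop :=
  Loopless G ∧ Fintype.card G.V = Fintype.card G.E + 1 ∧
    ∃! v : G.V, ∀ e : G.E, G.t e = v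

/-- `G` is a source on `n+1` vertices. -/
def IsSourceGraph (G : DiGraph) : Prop :=
  Loopless G ∧ Fintype.card G.V = Fintype.card G.E + 1 ∧
    ∃! v : G.V, ∀ e : G.E, G.s e = v

/-- `R` spans a sink: all its edges are non-loops with a common target and
pairwise distinct sources. -/
def IsSinkSet (G : DiGraph) (R : Finset G.E) : Prop :=
  ∃ v : G.V, (∀ e ∈ R, G.t e = v ∧ G.s e ≠ v) ∧
    ∀ e ∈ R, ∀ f ∈ R, G.s e = G.s f → e = f

/-- `R` spans a source. -/
def IsSourceSet (G : DiGraph) (R : Finset G.E) : Prop :=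
  ∃ v : G.V, (∀ e ∈ R, G.s e = v ∧ G.t e ≠ v) ∧
    ∀ e ∈ R, ∀ f ∈ R, G.t e = G.t f → e = f

/-- The whole digraph `G` is a coherently oriented cycle. -/
def IsCohCycleGraph (G : DiGraph) : Prop :=
  ∃ c : List G.E, IsCohCycle G c ∧ (∀ e : G.E, e ∈ c) ∧
    ∀ v : G.V, ∃ g ∈ c, G.s g = v

/-- Rank function of the multipath matroid: the size of a largest multipath
contained in `A`. -/
def mrank (G : DiGraph) (A : Finset G.E) : ℕ :=
  (A.powerset.filter (fun m => IsMultipath G m)).sup Finset.card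

/-- The Tutte polynomial of the multipath matroid of `G`, evaluated at `(x,y)`. -/
def tutte (G : DiGraph) (x y : ℤ) : ℤ :=
  ∑ A : Finset G.E,
    (x - 1) ^ (mrank G Finset.univ - mrank G A) *
      (y - 1) ^ (A.card - mrank G A)

/-- `e` is a loop of the multipath matroid. -/
def IsMatroidLoop (G : DiGraph) (e : G.E) : Prop := ¬IsMultipath G {e}

/-- `e` is a coloop of the multipath matroid: it belongs to every maximal
independent set. -/
def IsColoop (G : DiGraph) (e : G.E) : Prop :=
  ∀ m : Finset G.E, IsMultipath G m →
    (∀ m' : Finset G.E, IsMultipath G m' → m ⊆ m' → m' = m) → e ∈ m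

/-- The digraph obtained from `G` by deleting the edge `e`. -/
def deleteEdge (G : DiGraph) (e : G.E) : DiGraph where
  V := G.V
  E := {f : G.E // f ≠ e}
  s := fun f => G.s f.val
  t := fun f => G.t f.val

/-- The vertex set of the MP-contraction `G ⫽ e`: the vertices of `G` other
than the endpoints of `e`, together with a new vertex `x = Sum.inr ()`. -/
def CVert (G : DiGraph) (e : G.E) : Type :=
  {u : G.V // u ≠ G.s e ∧ u ≠ G.t e} ⊕ Unit

instance (G : DiGraph) (e : G.E) : Fintype (CVert G e) := by
  unfold CVert; infer_instance

instance (G : DiGraph) (e : G.E) : DecidableEq (CVert G e) := by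
  unfold CVert; infer_instance

/-- Source, in `G ⫽ e`, of the edge coming from the edge `f` of `G`
(for `e = (v,w)`, the new source is `x` iff `s f ∈ {v,w}` or `t f = w`). -/
def contrS (G : DiGraph) (e f : G.E) : CVert G e :=
  if h : G.s f = G.s e ∨ G.s f = G.t e ∨ G.t f = G.t e then Sum.inr ()
  else Sum.inl ⟨G.s f, by push_neg at h; exact ⟨h.1, h.2.1⟩⟩

/-- Target, in `G ⫽ e`, of the edge coming from the edge `f` of `G`
(for `e = (v,w)`, the new target is `x` iff `t f ∈ {v,w}` or `s f = v`). -/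
def contrT (G : DiGraph) (e f : G.E) : CVert G e :=
  if h : G.t f = G.s e ∨ G.t f = G.t e ∨ G.s f = G.s e then Sum.inr ()
  else Sum.inl ⟨G.t f, by push_neg at h; exact ⟨h.1, h.2.1⟩⟩

/-- The MP-contraction `G ⫽ e`. -/
def mpContract (G : DiGraph) (e : G.E) : DiGraph where
  V := CVert G e
  E := {f : G.E // f ≠ e}
  s := fun f => contrS G e f.val
  t := fun f => contrT G e f.val

/-- The digraph `C̃_e(G)`: the MP-contraction `G ⫽ e` with all loops at the
new vertex `x` deleted. -/
def tildeC (G : DiGraph) (e : G.E) : DiGraph where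
  V := CVert G e
  E := {f : G.E // f ≠ e ∧
         ¬(contrS G e f = Sum.inr () ∧ contrT G e f = Sum.inr ())}
  s := fun f => contrS G e f.val
  t := fun f => contrT G e f.val

/-- The classical contraction `G / e` of a non-loop edge `e = (v,w)`:
identify `w` with `v` and delete `e`. -/
def contractClassical (G : DiGraph) (e : G.E) (hne : G.s e ≠ G.t e) : DiGraph where
  V := {u : G.V // u ≠ G.t e}
  E := {f : G.E // f ≠ e}
  s := fun f => if h : G.s f.val = G.t e then ⟨G.s e, hne⟩ else ⟨G.s f.val, h⟩
  t := fun f => if h : G.t f.val = G.t e then ⟨G.s e, hne⟩ else ⟨G.t f.val, h⟩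

/-- A flowing k-colouring of `G`. -/
def IsFlowing (G : DiGraph) (k : ℕ) (c : G.V → Fin k) : Prop :=
  (∀ e : G.E, c (G.s e) ≠ c (G.t e)) ∧
  (∀ e f : G.E, G.t e = G.t f → c (G.s e) = c (G.s f)) ∧
  (∀ e f : G.E, G.s e = G.s f → c (G.t e) = c (G.t f))

/-- The number of flowing k-colourings of `G`. -/
def tau (G : DiGraph) (k : ℕ) : ℕ :=
  Nat.card {c : G.V → Fin k // IsFlowing G k c}

/-- The spanning subgraph of `G` with edge set `S`. -/
def subgraphOn (G : DiGraph) (S : Finset G.E) : DiGraph where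
  V := G.V
  E := {f : G.E // f ∈ S}
  s := fun f => G.s f.val
  t := fun f => G.t f.val

/-- The underlying undirected multigraph of `G` contains a cycle
(of length ≥ 1; a single loop, or two parallel/antiparallel edges, count). -/
def HasUndirCycle (G : DiGraph) : Prop :=
  ∃ (n : ℕ) (ed : Fin n → G.E) (vx : Fin n → G.V),
    0 < n ∧ Function.Injective ed ∧ Function.Injective vx ∧
    ∀ i : Fin n,
      (G.s (ed i) = vx i ∧ G.t (ed i) = vx ⟨(i.val + 1) % n, Nat.mod_lt _ i.pos⟩) ∨
      (G.t (ed i) = vx i ∧ G.s (ed i) = vx ⟨(i.val + 1) % n, Nat.mod_lt _ i.pos⟩)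

/-- The underlying undirected multigraph of `G` is a forest. -/
def IsForestD (G : DiGraph) : Prop := ¬HasUndirCycle G

/-- The underlying undirected multigraph of `G` is a tree. -/
def IsTreeD (G : DiGraph) : Prop := ConnectedD G ∧ IsForestD G

/-- The multipath matroid of `G` is representable over the field `F`. -/
def RepOver (G : DiGraph) (F : Type) [Field F] : Prop :=
  ∃ (n : ℕ) (N : Matrix (Fin n) G.E F),
    ∀ m : Finset G.E, IsMultipath G m ↔
      LinearIndependent F (fun f : {x : G.E // x ∈ m} => N.transpose f.val)

end DiGraph

/-- A finite undirected multigraph. -/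
structure Multigraph where
  V : Type
  E : Type
  [fintV : Fintype V]
  [decV : DecidableEq V]
  [fintE : Fintype E]
  [decE : DecidableEq E]
  ends : E → Sym2 V

attribute [instance] Multigraph.fintV Multigraph.decV Multigraph.fintE Multigraph.decE

/-- The multigraph `M` has a cycle all of whose edges lie in `F`. -/
def Multigraph.HasCycleIn (M : Multigraph) (F : Finset M.E) : Prop :=
  ∃ (n : ℕ) (ed : Fin n → M.E) (vx : Fin n → M.V),
    0 < n ∧ Function.Injective ed ∧ Function.Injective vx ∧
    (∀ i : Fin n, ed i ∈ F) ∧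
    ∀ i : Fin n, M.ends (ed i) = s(vx i, vx ⟨(i.val + 1) % n, Nat.mod_lt _ i.pos⟩)

namespace DiGraph

variable {G : DiGraph}

lemma adj_symm {z w : G.V} (h : adj G z w) : adj G w z := by
  obtain ⟨e, h⟩ := h; exact ⟨e, h.symm⟩

lemma conn_pred (P : G.V → Prop) (hP : ∀ z w, adj G z w → P z → P w) :
    ∀ z w, connRel G z w → (P z ↔ P w) := by
  intro z w h
  induction h with
  | rel x y hxy => exact ⟨hP x y hxy, hP y x (adj_symm hxy)⟩
  | refl x => exact Iff.rfl
  | symm x y _ ih => exact ih.symm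
  | trans x y z _ _ ih1 ih2 => exact ih1.trans ih2

lemma connRel_incident {z w : G.V} (h : connRel G z w) :
    z = w ∨ ((∃ e, G.s e = z ∨ G.t e = z) ∧ (∃ e, G.s e = w ∨ G.t e = w)) := by
  induction h with
  | rel x y hxy =>
      obtain ⟨e, he⟩ := hxy
      rcases he with ⟨h1, h2⟩ | ⟨h1, h2⟩
      · exact Or.inr ⟨⟨e, Or.inl h1⟩, ⟨e, Or.inr h2⟩⟩
      · exact Or.inr ⟨⟨e, Or.inr h2⟩, ⟨e, Or.inl h1⟩⟩
  | refl x => exact Or.inl rfl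
  | symm x y _ ih =>
      rcases ih with h | h
      · exact Or.inl h.symm
      · exact Or.inr ⟨h.2, h.1⟩
  | trans x y z _ _ ih1 ih2 =>
      rcases ih1 with rfl | h1
      · exact ih2
      · rcases ih2 with rfl | h2
        · exact Or.inr h1
        · exact Or.inr ⟨h1.1, h2.2⟩

lemma acyclic (hMP2 : MP2 G) (hconn : ConnectedD G) (hll : Loopless G)
    (hnc : ¬IsCohCycleGraph G) : ∀ c : List G.E, ¬IsCohCycle G c := by
  intro c hc
  obtain ⟨hne, hnd, hsnd, hcyc⟩ := hc
  rcases Nat.lt_or_ge c.length 2 with hlen | hlen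
  · have h0 : 0 < c.length := List.length_pos_iff.mpr hne
    have h1 : c.length = 1 := by omega
    obtain ⟨j, hj⟩ : ∃ j : Fin c.length, G.t (c.get ⟨0, h0⟩) = G.s (c.get j) :=
      ⟨_, hcyc ⟨0, h0⟩⟩
    have hj0 : j = ⟨0, h0⟩ := by
      apply Fin.ext
      have := j.isLt
      omega
    rw [hj0] at hj
    exact hll _ hj.symm
  · have hclose := hMP2 c ⟨hne, hnd, hsnd, hcyc⟩ hlen
    have hstep : ∀ z w, adj G z w → (∃ g ∈ c, G.s g = z) → (∃ g ∈ c, G.s g = w) := by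
      rintro z w ⟨h, hh⟩ hz
      have hhc : h ∈ c := by
        apply hclose
        obtain ⟨g, hg, hgs⟩ := hz
        rcases hh with ⟨h1, h2⟩ | ⟨h1, h2⟩
        · exact ⟨g, hg, Or.inl (hgs.trans h1.symm)⟩
        · exact ⟨g, hg, Or.inr (hgs.trans h2.symm)⟩
      rcases hh with ⟨h1, h2⟩ | ⟨h1, h2⟩
      · obtain ⟨i, hi⟩ := List.mem_iff_get.mp hhc
        have hti := hcyc i
        rw [hi] at hti
        exact ⟨_, List.get_mem _ _, hti.symm.trans h2⟩
      · exact ⟨h, hhc, h1⟩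
    have hallP : ∀ z, ∃ g ∈ c, G.s g = z := by
      intro z
      obtain ⟨g₀, hg₀⟩ : ∃ g, g ∈ c := List.exists_mem_of_ne_nil c hne
      exact (conn_pred _ hstep (G.s g₀) z (hconn.2 _ _)).mp ⟨g₀, hg₀, rfl⟩
    refine hnc ⟨c, ⟨hne, hnd, hsnd, hcyc⟩, ?_, hallP⟩
    intro e
    obtain ⟨g, hg, hgs⟩ := hallP (G.s e)
    exact hclose e ⟨g, hg, Or.inl hgs⟩

lemma two_cycle (e f : G.E) (h1 : G.t e = G.s f) (h2 : G.t f = G.s e)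
    (h3 : G.s e ≠ G.s f) : IsCohCycle G [e, f] := by
  have hef : e ≠ f := fun hh => h3 (hh ▸ rfl)
  refine ⟨by simp, by simp [hef], by simp [h3], ?_⟩
  intro i
  fin_cases i
  · simpa using h1
  · simpa using h2

lemma indeg_pos_of {g : G.E} {z : G.V} (h : G.t g = z) : 0 < indeg G z :=
  Finset.card_pos.mpr ⟨g, Finset.mem_filter.mpr ⟨Finset.mem_univ g, h⟩⟩

lemma outdeg_pos_of {g : G.E} {z : G.V} (h : G.s g = z) : 0 < outdeg G z :=
  Finset.card_pos.mpr ⟨g, Finset.mem_filter.mpr ⟨Finset.mem_univ g, h⟩⟩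

lemma indegIn_eq_zero {R : Finset G.E} {z : G.V} (h : ∀ g ∈ R, G.t g ≠ z) :
    indegIn G R z = 0 := by
  simp only [indegIn, Finset.card_eq_zero, Finset.filter_eq_empty_iff]
  exact h

lemma outdegIn_eq_zero {R : Finset G.E} {z : G.V} (h : ∀ g ∈ R, G.s g ≠ z) :
    outdegIn G R z = 0 := by
  simp only [outdegIn, Finset.card_eq_zero, Finset.filter_eq_empty_iff]
  exact h

lemma indeg_eq_zero_iff {z : G.V} : indeg G z = 0 ↔ ∀ g, G.t g ≠ z := by
  simp only [indeg, indegIn, Finset.card_eq_zero, Finset.filter_eq_empty_iff,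
    Finset.mem_univ, true_implies]

lemma outdeg_eq_zero_iff {z : G.V} : outdeg G z = 0 ↔ ∀ g, G.s g ≠ z := by
  simp only [outdeg, outdegIn, Finset.card_eq_zero, Finset.filter_eq_empty_iff,
    Finset.mem_univ, true_implies]

lemma instar_closed (hA : ¬HasPatternA G) (hB : ¬HasPatternB G) (hU : EdgeUnique G)
    (hll : Loopless G) {v : G.V}
    (h2 : ∃ e e', e ≠ e' ∧ G.t e = v ∧ G.t e' = v) :
    ∀ g, G.t g = v → ∀ h, G.s h = G.s g → G.t h = v := by
  intro g hg h hsh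
  by_contra hb
  obtain ⟨e, e', hne, he, he'⟩ := h2
  have hss : G.s e ≠ G.s e' := fun hs =>
    hne (hU e e' hs (he.trans he'.symm) (hll e))
  obtain ⟨k, hk, hky⟩ : ∃ k, G.t k = v ∧ G.s k ≠ G.s g := by
    by_cases hex : G.s e = G.s g
    · exact ⟨e', he', fun hh => hss (hex.trans hh.symm)⟩
    · exact ⟨e, he, hex⟩
  have hxv : G.s g ≠ v := fun hh => hll g (hh.trans hg.symm)
  have hyv : G.s k ≠ v := fun hh => hll k (hh.trans hk.symm)
  have hbx : G.s g ≠ G.t h := fun hh => hll h (hsh.trans hh)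
  by_cases hby : G.t h = G.s k
  · exact hA ⟨G.t h, G.s g, v, Ne.symm hbx, hb, hxv,
      ⟨h, hsh, rfl⟩, ⟨k, hby.symm, hk⟩, ⟨g, rfl, hg⟩⟩
  · exact hB ⟨G.s k, v, G.s g, G.t h, hyv, hky, fun hh => hby hh.symm,
      Ne.symm hxv, Ne.symm hb, hbx,
      ⟨k, rfl, hk⟩, ⟨g, rfl, hg⟩, ⟨h, hsh, rfl⟩⟩

lemma outstar_closed (hA : ¬HasPatternA G) (hBrev : ¬HasPatternBrev G)
    (hU : EdgeUnique G) (hll : Loopless G) {u : G.V}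
    (h2 : ∃ e e', e ≠ e' ∧ G.s e = u ∧ G.s e' = u) :
    ∀ g, G.s g = u → ∀ h, G.t h = G.t g → G.s h = u := by
  intro g hg h hht
  by_contra hb
  obtain ⟨e, e', hne, he, he'⟩ := h2
  have htt : G.t e ≠ G.t e' := fun ht =>
    hne (hU e e' (he.trans he'.symm) ht (hll e))
  obtain ⟨k, hk, hky⟩ : ∃ k, G.s k = u ∧ G.t k ≠ G.t g := by
    by_cases hex : G.t e = G.t g
    · exact ⟨e', he', fun hh => htt (hex.trans hh.symm)⟩
    · exact ⟨e, he, hex⟩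
  have hzu : G.t g ≠ u := fun hh => hll g (hg.trans hh.symm)
  have hyu : G.t k ≠ u := fun hh => hll k (hk.trans hh.symm)
  have hbz : G.s h ≠ G.t g := fun hh => hll h (hh.trans hht.symm)
  by_cases hby : G.s h = G.t k
  · exact hA ⟨G.t k, u, G.t g, hyu, hky, Ne.symm hzu,
      ⟨k, hk, rfl⟩, ⟨h, hby, hht⟩, ⟨g, hg, rfl⟩⟩
  · exact hBrev ⟨G.t k, u, G.t g, G.s h, hyu, hky, fun hh => hby hh.symm,
      Ne.symm hzu, Ne.symm hb, Ne.symm hbz,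
      ⟨k, hk, rfl⟩, ⟨g, hg, rfl⟩, ⟨h, rfl, hht⟩⟩

lemma instar_region (hA : ¬HasPatternA G) (hB : ¬HasPatternB G) (hU : EdgeUnique G)
    (hll : Loopless G) (hacyc : ∀ c : List G.E, ¬IsCohCycle G c) {v : G.V}
    (h2 : ∃ e e', e ≠ e' ∧ G.t e = v ∧ G.t e' = v) :
    IsDynRegion G (Finset.univ.filter (fun g => G.t g = v)) := by
  have hclosed := instar_closed hA hB hU hll h2
  obtain ⟨e, -, -, he, -⟩ := h2
  have hmem : ∀ g : G.E, g ∈ Finset.univ.filter (fun g => G.t g = v) ↔ G.t g = v := by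
    intro g; simp
  refine ⟨⟨e, (hmem e).mpr he⟩, ?_, ?_, fun c hc => absurd hc (hacyc c)⟩
  · intro g hg f hf
    have h1 : adjIn G _ (G.s g) v := ⟨g, hg, Or.inl ⟨rfl, (hmem g).mp hg⟩⟩
    have h2' : adjIn G _ (G.s f) v := ⟨f, hf, Or.inl ⟨rfl, (hmem f).mp hf⟩⟩
    exact Relation.EqvGen.trans _ _ _ (Relation.EqvGen.rel _ _ h1)
      (Relation.EqvGen.symm _ _ (Relation.EqvGen.rel _ _ h2'))
  · intro z hzR hzC
    obtain ⟨g, hgR, hgz⟩ := hzR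
    obtain ⟨h, hhC, hhz⟩ := hzC
    have hgv : G.t g = v := (hmem g).mp hgR
    have hhv : G.t h ≠ v := fun hh => (Finset.mem_sdiff.mp hhC).2 ((hmem h).mpr hh)
    by_cases hzv : z = v
    · subst hzv
      have hsh : G.s h = z := hhz.resolve_right hhv
      refine ⟨⟨indeg_pos_of hgv, outdeg_pos_of hsh⟩, Or.inr ?_, Or.inl ?_⟩
      · exact outdegIn_eq_zero fun f hf hsf =>
          hll f (hsf.trans ((hmem f).mp hf).symm)
      · exact indegIn_eq_zero fun f hf htf =>
          (Finset.mem_sdiff.mp hf).2 ((hmem f).mpr htf)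
    · have hsg : G.s g = z := by
        rcases hgz with h1 | h1
        · exact h1
        · exact absurd (h1.symm.trans hgv) hzv
      have hth : G.t h = z := by
        rcases hhz with h1 | h1
        · exact absurd (hclosed g hgv h (h1.trans hsg.symm)) hhv
        · exact h1
      refine ⟨⟨indeg_pos_of hth, outdeg_pos_of hsg⟩, Or.inl ?_, Or.inr ?_⟩
      · exact indegIn_eq_zero fun f hf htf => hzv (htf.symm.trans ((hmem f).mp hf))
      · exact outdegIn_eq_zero fun f hf hsf => (Finset.mem_sdiff.mp hf).2
          ((hmem f).mpr (hclosed g hgv f (hsf.trans hsg.symm)))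

lemma outstar_region (hA : ¬HasPatternA G) (hBrev : ¬HasPatternBrev G)
    (hU : EdgeUnique G) (hll : Loopless G)
    (hacyc : ∀ c : List G.E, ¬IsCohCycle G c) {u : G.V}
    (h2 : ∃ e e', e ≠ e' ∧ G.s e = u ∧ G.s e' = u) :
    IsDynRegion G (Finset.univ.filter (fun g => G.s g = u)) := by
  have hclosed := outstar_closed hA hBrev hU hll h2
  obtain ⟨e, -, -, he, -⟩ := h2
  have hmem : ∀ g : G.E, g ∈ Finset.univ.filter (fun g => G.s g = u) ↔ G.s g = u := by
    intro g; simp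
  refine ⟨⟨e, (hmem e).mpr he⟩, ?_, ?_, fun c hc => absurd hc (hacyc c)⟩
  · intro g hg f hf
    have h1 : adjIn G _ u (G.t g) := ⟨g, hg, Or.inl ⟨(hmem g).mp hg, rfl⟩⟩
    have h2' : adjIn G _ u (G.t f) := ⟨f, hf, Or.inl ⟨(hmem f).mp hf, rfl⟩⟩
    rw [(hmem g).mp hg, (hmem f).mp hf]
    exact Relation.EqvGen.refl _
  · intro z hzR hzC
    obtain ⟨g, hgR, hgz⟩ := hzR
    obtain ⟨h, hhC, hhz⟩ := hzC
    have hgu : G.s g = u := (hmem g).mp hgR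
    have hhu : G.s h ≠ u := fun hh => (Finset.mem_sdiff.mp hhC).2 ((hmem h).mpr hh)
    by_cases hzu : z = u
    · subst hzu
      have hth : G.t h = z := hhz.resolve_left hhu
      refine ⟨⟨indeg_pos_of hth, outdeg_pos_of hgu⟩, Or.inl ?_, Or.inr ?_⟩
      · exact indegIn_eq_zero fun f hf htf =>
          hll f (((hmem f).mp hf).trans htf.symm)
      · exact outdegIn_eq_zero fun f hf hsf =>
          (Finset.mem_sdiff.mp hf).2 ((hmem f).mpr hsf)
    · have htg : G.t g = z := by
        rcases hgz with h1 | h1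
        · exact absurd (h1.symm.trans hgu) hzu
        · exact h1
      have hsh : G.s h = z := by
        rcases hhz with h1 | h1
        · exact h1
        · exact absurd (hclosed g hgu h (h1.trans htg.symm)) hhu
      refine ⟨⟨indeg_pos_of htg, outdeg_pos_of hsh⟩, Or.inr ?_, Or.inl ?_⟩
      · exact outdegIn_eq_zero fun f hf hsf => hzu (hsf.symm.trans ((hmem f).mp hf))
      · exact indegIn_eq_zero fun f hf htf => (Finset.mem_sdiff.mp hf).2
          ((hmem f).mpr (hclosed g hgu f (htf.trans htg.symm)))

lemma single_region (hll : Loopless G) (hacyc : ∀ c : List G.E, ¬IsCohCycle G c)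
    (e : G.E) (hin : ∀ g, G.t g = G.t e → g = e)
    (hout : ∀ g, G.s g = G.s e → g = e) :
    IsDynRegion G ({e} : Finset G.E) := by
  refine ⟨⟨e, Finset.mem_singleton_self e⟩, ?_, ?_, fun c hc => absurd hc (hacyc c)⟩
  · intro g hg f hf
    rw [Finset.mem_singleton] at hg hf
    subst hg; subst hf
    exact Relation.EqvGen.refl _
  · intro z hzR hzC
    obtain ⟨g, hgR, hgz⟩ := hzR
    rw [Finset.mem_singleton] at hgR
    subst hgR
    obtain ⟨h, hhC, hhz⟩ := hzC
    have hhe : h ≠ g := fun hh =>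
      (Finset.mem_sdiff.mp hhC).2 (Finset.mem_singleton.mpr hh)
    rcases hgz with h1 | h1
    · subst h1
      have hth : G.t h = G.s g := by
        rcases hhz with h2 | h2
        · exact absurd (hout h h2) hhe
        · exact h2
      refine ⟨⟨indeg_pos_of hth, outdeg_pos_of rfl⟩, Or.inl ?_, Or.inr ?_⟩
      · refine indegIn_eq_zero fun f hf htf => ?_
        rw [Finset.mem_singleton.mp hf] at htf
        exact hll g htf.symm
      · exact outdegIn_eq_zero fun f hf hsf =>
          (Finset.mem_sdiff.mp hf).2 (Finset.mem_singleton.mpr (hout f hsf))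
    · subst h1
      have hsh : G.s h = G.t g := by
        rcases hhz with h2 | h2
        · exact h2
        · exact absurd (hin h h2) hhe
      refine ⟨⟨indeg_pos_of rfl, outdeg_pos_of hsh⟩, Or.inr ?_, Or.inl ?_⟩
      · refine outdegIn_eq_zero fun f hf hsf => ?_
        rw [Finset.mem_singleton.mp hf] at hsf
        exact hll g hsf
      · exact indegIn_eq_zero fun f hf htf =>
          (Finset.mem_sdiff.mp hf).2 (Finset.mem_singleton.mpr (hin f htf))

lemma exists_module_subset {R : Finset G.E} (hR : IsDynRegion G R) :
    ∃ M, IsDynModule G M ∧ M ⊆ R := by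
  obtain ⟨M, hM, hmin⟩ := Finset.exists_min_image
    (R.powerset.filter (fun X => IsDynRegion G X)) Finset.card
    ⟨R, Finset.mem_filter.mpr ⟨Finset.mem_powerset.mpr (subset_refl R), hR⟩⟩
  rw [Finset.mem_filter, Finset.mem_powerset] at hM
  refine ⟨M, ⟨hM.2, ?_⟩, hM.1⟩
  intro R' hsub hR'
  exact Finset.eq_of_subset_of_card_le hsub
    (hmin R' (Finset.mem_filter.mpr ⟨Finset.mem_powerset.mpr (hsub.trans hM.1), hR'⟩))


lemma sink_of_two_in (hA : ¬HasPatternA G) (hB : ¬HasPatternB G) (hU : EdgeUnique G)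
    (hll : Loopless G) (hconn : ConnectedD G)
    (hst : ∀ z, indeg G z = 0 ∨ outdeg G z = 0) {a : G.V}
    (h2 : ∃ e e', e ≠ e' ∧ G.t e = a ∧ G.t e' = a) : IsSinkGraph G := by
  have hclosed := instar_closed hA hB hU hll h2
  obtain ⟨e₀, -, -, he0, -⟩ := h2
  have houta : outdeg G a = 0 := by
    rcases hst a with h | h
    · exact absurd (indeg_eq_zero_iff.mp h e₀) (fun hh => hh he0)
    · exact h
  have hnoout : ∀ h : G.E, G.s h ≠ a := outdeg_eq_zero_iff.mp houta
  have hstep : ∀ z w, adj G z w →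
      (z = a ∨ ((∀ h, G.s h = z → G.t h = a) ∧ ∀ h, G.t h ≠ z)) →
      (w = a ∨ ((∀ h, G.s h = w → G.t h = a) ∧ ∀ h, G.t h ≠ w)) := by
    rintro z w ⟨g, hg⟩ hz
    by_cases hwa : w = a
    · exact Or.inl hwa
    rcases hz with rfl | ⟨hz1, hz2⟩
    · have hga : G.s g = w ∧ G.t g = z := by
        rcases hg with ⟨h1, h2⟩ | ⟨h1, h2⟩
        · exact absurd h1 (hnoout g)
        · exact ⟨h1, h2⟩
      have hwout : outdeg G w ≠ 0 := fun hh => outdeg_eq_zero_iff.mp hh g hga.1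
      have hwin : indeg G w = 0 := (hst w).resolve_right hwout
      refine Or.inr ⟨fun h hh => hclosed g hga.2 h (hh.trans hga.1.symm),
        indeg_eq_zero_iff.mp hwin⟩
    · rcases hg with ⟨h1, h2⟩ | ⟨h1, h2⟩
      · exact absurd (h2.symm.trans (hz1 g h1)) hwa
      · exact absurd h2 (hz2 g)
  have hPall : ∀ z, z = a ∨ ((∀ h, G.s h = z → G.t h = a) ∧ ∀ h, G.t h ≠ z) :=
    fun z => (conn_pred _ hstep a z (hconn.2 a z)).mp (Or.inl rfl)
  have htgt : ∀ g : G.E, G.t g = a := by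
    intro g
    rcases hPall (G.s g) with hh | ⟨hh, -⟩
    · exact absurd hh (hnoout g)
    · exact hh g rfl
  have hbij : Function.Bijective
      (fun g : G.E => (⟨G.s g, hnoout g⟩ : {z : G.V // z ≠ a})) := by
    constructor
    · intro g g' hgg
      rw [Subtype.mk.injEq] at hgg
      exact hU g g' hgg ((htgt g).trans (htgt g').symm) (hll g)
    · rintro ⟨z, hz⟩
      rcases connRel_incident (hconn.2 a z) with rfl | ⟨-, ⟨g, hg⟩⟩
      · exact absurd rfl hz
      · rcases hg with hg | hg
        · exact ⟨g, Subtype.ext hg⟩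
        · rcases hPall z with rfl | ⟨-, h2'⟩
          · exact absurd rfl hz
          · exact absurd hg (h2' g)
  have hcard : Fintype.card G.E = Fintype.card {z : G.V // z ≠ a} :=
    Fintype.card_of_bijective hbij
  have hcard2 : Fintype.card {z : G.V // z ≠ a} = Fintype.card G.V - 1 := by
    simp [Fintype.card_subtype_compl]
  have hpos : 0 < Fintype.card G.V := Fintype.card_pos_iff.mpr ⟨a⟩
  exact ⟨hll, by omega, a, htgt, fun v' hv' => ((hv' e₀).symm.trans he0)⟩

lemma source_of_two_out (hA : ¬HasPatternA G) (hBrev : ¬HasPatternBrev G)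
    (hU : EdgeUnique G) (hll : Loopless G) (hconn : ConnectedD G)
    (hst : ∀ z, indeg G z = 0 ∨ outdeg G z = 0) {a : G.V}
    (h2 : ∃ e e', e ≠ e' ∧ G.s e = a ∧ G.s e' = a) : IsSourceGraph G := by
  have hclosed := outstar_closed hA hBrev hU hll h2
  obtain ⟨e₀, -, -, he0, -⟩ := h2
  have hina : indeg G a = 0 := by
    rcases hst a with h | h
    · exact h
    · exact absurd (outdeg_eq_zero_iff.mp h e₀) (fun hh => hh he0)
  have hnoin : ∀ h : G.E, G.t h ≠ a := indeg_eq_zero_iff.mp hina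
  have hstep : ∀ z w, adj G z w →
      (z = a ∨ ((∀ h, G.t h = z → G.s h = a) ∧ ∀ h, G.s h ≠ z)) →
      (w = a ∨ ((∀ h, G.t h = w → G.s h = a) ∧ ∀ h, G.s h ≠ w)) := by
    rintro z w ⟨g, hg⟩ hz
    by_cases hwa : w = a
    · exact Or.inl hwa
    rcases hz with rfl | ⟨hz1, hz2⟩
    · have hga : G.t g = w ∧ G.s g = z := by
        rcases hg with ⟨h1, h2⟩ | ⟨h1, h2⟩
        · exact ⟨h2, h1⟩
        · exact absurd h2 (hnoin g)
      have hwin : indeg G w ≠ 0 := fun hh => indeg_eq_zero_iff.mp hh g hga.1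
      have hwout : outdeg G w = 0 := (hst w).resolve_left hwin
      refine Or.inr ⟨fun h hh => hclosed g hga.2 h (hh.trans hga.1.symm),
        outdeg_eq_zero_iff.mp hwout⟩
    · rcases hg with ⟨h1, h2⟩ | ⟨h1, h2⟩
      · exact absurd h1 (hz2 g)
      · exact absurd (h1.symm.trans (hz1 g h2)) hwa
  have hPall : ∀ z, z = a ∨ ((∀ h, G.t h = z → G.s h = a) ∧ ∀ h, G.s h ≠ z) :=
    fun z => (conn_pred _ hstep a z (hconn.2 a z)).mp (Or.inl rfl)
  have hsrc : ∀ g : G.E, G.s g = a := by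
    intro g
    rcases hPall (G.t g) with hh | ⟨hh, -⟩
    · exact absurd hh (hnoin g)
    · exact hh g rfl
  have hbij : Function.Bijective
      (fun g : G.E => (⟨G.t g, hnoin g⟩ : {z : G.V // z ≠ a})) := by
    constructor
    · intro g g' hgg
      rw [Subtype.mk.injEq] at hgg
      exact hU g g' ((hsrc g).trans (hsrc g').symm) hgg (hll g)
    · rintro ⟨z, hz⟩
      rcases connRel_incident (hconn.2 a z) with rfl | ⟨-, ⟨g, hg⟩⟩
      · exact absurd rfl hz
      · rcases hg with hg | hg
        · rcases hPall z with rfl | ⟨-, h2'⟩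
          · exact absurd rfl hz
          · exact absurd hg (h2' g)
        · exact ⟨g, Subtype.ext hg⟩
  have hcard : Fintype.card G.E = Fintype.card {z : G.V // z ≠ a} :=
    Fintype.card_of_bijective hbij
  have hcard2 : Fintype.card {z : G.V // z ≠ a} = Fintype.card G.V - 1 := by
    simp [Fintype.card_subtype_compl]
  have hpos : 0 < Fintype.card G.V := Fintype.card_pos_iff.mpr ⟨a⟩
  exact ⟨hll, by omega, a, hsrc, fun v' hv' => ((hv' e₀).symm.trans he0)⟩


lemma sink_of_tiny (hll : Loopless G) (hconn : ConnectedD G)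
    (hst : ∀ z, indeg G z = 0 ∨ outdeg G z = 0)
    (hTinj : ∀ g g' : G.E, G.t g = G.t g' → g = g')
    (hSinj : ∀ g g' : G.E, G.s g = G.s g' → g = g') : IsSinkGraph G := by
  have huniq : ∀ (z : G.V) (g g' : G.E), (G.s g = z ∨ G.t g = z) →
      (G.s g' = z ∨ G.t g' = z) → g = g' := by
    intro z g g' h h'
    rcases h with h | h <;> rcases h' with h' | h'
    · exact hSinj g g' (h.trans h'.symm)
    · exfalso
      rcases hst z with hh | hh
      · exact indeg_eq_zero_iff.mp hh g' h'
      · exact outdeg_eq_zero_iff.mp hh g h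
    · exfalso
      rcases hst z with hh | hh
      · exact indeg_eq_zero_iff.mp hh g h
      · exact outdeg_eq_zero_iff.mp hh g' h'
    · exact hTinj g g' (h.trans h'.symm)
  have hchain : ∀ z w, connRel G z w → z = w ∨ adj G z w := by
    intro z w h
    induction h with
    | rel x y hxy => exact Or.inr hxy
    | refl x => exact Or.inl rfl
    | symm x y _ ih =>
        rcases ih with h | h
        · exact Or.inl h.symm
        · exact Or.inr (adj_symm h)
    | trans x y z' _ _ ih1 ih2 =>
        rcases ih1 with rfl | h1
        · exact ih2
        rcases ih2 with rfl | h2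
        · exact Or.inr h1
        obtain ⟨g, hg⟩ := h1
        obtain ⟨g', hg'⟩ := h2
        have hgg : g = g' := by
          apply huniq y g g'
          · rcases hg with ⟨a1, a2⟩ | ⟨a1, a2⟩
            · exact Or.inr a2
            · exact Or.inl a1
          · rcases hg' with ⟨b1, b2⟩ | ⟨b1, b2⟩
            · exact Or.inl b1
            · exact Or.inr b2
        subst hgg
        rcases hg with ⟨a1, a2⟩ | ⟨a1, a2⟩ <;> rcases hg' with ⟨b1, b2⟩ | ⟨b1, b2⟩
        · exact Or.inr ⟨g, Or.inl ⟨a1, b2⟩⟩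
        · exact Or.inl (a1.symm.trans b1)
        · exact Or.inl (a2.symm.trans b2)
        · exact Or.inr ⟨g, Or.inr ⟨b1, a2⟩⟩
  by_cases hE : Nonempty G.E
  · obtain ⟨e₀⟩ := hE
    have hall : ∀ f : G.E, f = e₀ := by
      intro f
      rcases hchain _ _ (hconn.2 (G.s f) (G.s e₀)) with h | h
      · exact hSinj f e₀ h
      · obtain ⟨g, hg⟩ := h
        have h1 : g = f := by
          apply huniq (G.s f) g f _ (Or.inl rfl)
          rcases hg with ⟨a1, a2⟩ | ⟨a1, a2⟩
          · exact Or.inl a1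
          · exact Or.inr a2
        have h2 : g = e₀ := by
          apply huniq (G.s e₀) g e₀ _ (Or.inl rfl)
          rcases hg with ⟨a1, a2⟩ | ⟨a1, a2⟩
          · exact Or.inr a2
          · exact Or.inl a1
        exact h1.symm.trans h2
    have hvx : ∀ z : G.V, z = G.s e₀ ∨ z = G.t e₀ := by
      intro z
      rcases hchain _ _ (hconn.2 z (G.s e₀)) with h | h
      · exact Or.inl h
      · obtain ⟨g, hg⟩ := h
        rw [hall g] at hg
        rcases hg with ⟨h1, h2⟩ | ⟨h1, h2⟩
        · exact absurd h2.symm (hll e₀)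
        · exact Or.inr h2.symm
    have hcardE : Fintype.card G.E = 1 := Fintype.card_eq_one_iff.mpr ⟨e₀, hall⟩
    have hcardV : Fintype.card G.V = 2 := by
      rw [← Finset.card_univ, Finset.card_eq_two]
      exact ⟨G.s e₀, G.t e₀, hll e₀, by ext z; simpa using hvx z⟩
    exact ⟨hll, by omega, G.t e₀, fun g => by rw [hall g], fun v' hv' => (hv' e₀).symm⟩
  · have hEe : IsEmpty G.E := not_nonempty_iff.mp hE
    have hVone : ∀ z w : G.V, connRel G z w → z = w := by
      intro z w h
      induction h with
      | rel x y hxy => obtain ⟨g, -⟩ := hxy; exact (hEe.false g).elim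
      | refl x => rfl
      | symm x y _ ih => exact ih.symm
      | trans x y z' _ _ ih1 ih2 => exact ih1.trans ih2
    obtain ⟨v₀⟩ := hconn.1
    have hcardV : Fintype.card G.V = 1 :=
      Fintype.card_eq_one_iff.mpr ⟨v₀, fun z => hVone z v₀ (hconn.2 z v₀)⟩
    have hcardE : Fintype.card G.E = 0 := by
      simp only [Fintype.card_eq_zero_iff]
      exact hEe
    exact ⟨hll, by omega, v₀, fun e => (hEe.false e).elim,
      fun v' _ => hVone v' v₀ (hconn.2 v' v₀)⟩


end DiGraph

/-- A connected loopless MP-digraph which is not a coherently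
oriented cycle and has a unique dynamical module is a sink or a source. -/
theorem unique_module_sink_or_source (G : DiGraph) (hU : G.EdgeUnique)
    (hMP : G.IsMPDigraph) (hconn : G.ConnectedD) (hll : G.Loopless)
    (hnc : ¬G.IsCohCycleGraph)
    (hmod : ∃! R : Finset G.E, DiGraph.IsDynModule G R) :
    G.IsSinkGraph ∨ G.IsSourceGraph := by
  obtain ⟨⟨hA, hArev, hB, hBrev⟩, hMP2⟩ := hMP
  have hacyc : ∀ c : List G.E, ¬G.IsCohCycle c :=
    DiGraph.acyclic hMP2 hconn hll hnc
  by_cases hun : ∃ v, DiGraph.UnstableG G v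
  · exfalso
    obtain ⟨v, hv⟩ := hun
    have hvi : 0 < (Finset.univ.filter (fun g => G.t g = v)).card := hv.1
    have hvo : 0 < (Finset.univ.filter (fun g => G.s g = v)).card := hv.2
    obtain ⟨e, hee⟩ := Finset.card_pos.mp hvi
    have he : G.t e = v := (Finset.mem_filter.mp hee).2
    obtain ⟨f, hff⟩ := Finset.card_pos.mp hvo
    have hf : G.s f = v := (Finset.mem_filter.mp hff).2
    have hRin : ∃ R, DiGraph.IsDynRegion G R ∧
        (∀ g ∈ R, G.t g = v ∨ G.s g = G.s e) := by
      by_cases h2 : ∃ e', e' ≠ e ∧ G.t e' = v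
      · obtain ⟨e', hne', hte'⟩ := h2
        refine ⟨_, DiGraph.instar_region hA hB hU hll hacyc
          ⟨e, e', Ne.symm hne', he, hte'⟩, ?_⟩
        intro g hg
        exact Or.inl (Finset.mem_filter.mp hg).2
      · by_cases h3 : ∃ e₂, e₂ ≠ e ∧ G.s e₂ = G.s e
        · obtain ⟨e₂, hne₂, hse₂⟩ := h3
          refine ⟨_, DiGraph.outstar_region hA hBrev hU hll hacyc
            ⟨e, e₂, Ne.symm hne₂, rfl, hse₂⟩, ?_⟩
          intro g hg
          exact Or.inr (Finset.mem_filter.mp hg).2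
        · push_neg at h2 h3
          refine ⟨{e}, DiGraph.single_region hll hacyc e ?_ ?_, ?_⟩
          · intro g hg
            by_contra hne
            exact h2 g hne (hg.trans he)
          · intro g hg
            by_contra hne
            exact h3 g hne hg
          · intro g hg
            rw [Finset.mem_singleton.mp hg]
            exact Or.inl he
    have hRout : ∃ R, DiGraph.IsDynRegion G R ∧
        (∀ g ∈ R, G.s g = v ∨ G.t g = G.t f) := by
      by_cases h2 : ∃ f', f' ≠ f ∧ G.s f' = v
      · obtain ⟨f', hne', hsf'⟩ := h2
        refine ⟨_, DiGraph.outstar_region hA hBrev hU hll hacyc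
          ⟨f, f', Ne.symm hne', hf, hsf'⟩, ?_⟩
        intro g hg
        exact Or.inl (Finset.mem_filter.mp hg).2
      · by_cases h3 : ∃ f₂, f₂ ≠ f ∧ G.t f₂ = G.t f
        · obtain ⟨f₂, hne₂, htf₂⟩ := h3
          refine ⟨_, DiGraph.instar_region hA hB hU hll hacyc
            ⟨f, f₂, Ne.symm hne₂, rfl, htf₂⟩, ?_⟩
          intro g hg
          exact Or.inr (Finset.mem_filter.mp hg).2
        · push_neg at h2 h3
          refine ⟨{f}, DiGraph.single_region hll hacyc f ?_ ?_, ?_⟩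
          · intro g hg
            by_contra hne
            exact h3 g hne hg
          · intro g hg
            by_contra hne
            exact h2 g hne (hg.trans hf)
          · intro g hg
            rw [Finset.mem_singleton.mp hg]
            exact Or.inl hf
    obtain ⟨R1, hR1, hspec1⟩ := hRin
    obtain ⟨R2, hR2, hspec2⟩ := hRout
    have huv : G.s e ≠ v := fun hh => hll e (hh.trans he.symm)
    have hvw : v ≠ G.t f := fun hh => hll f (hf.trans hh)
    have hdisj : ∀ g, g ∈ R1 → g ∈ R2 → False := by
      intro g hg1 hg2
      rcases hspec1 g hg1 with h1 | h1 <;> rcases hspec2 g hg2 with h2 | h2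
      · exact hll g (h2.trans h1.symm)
      · exact hvw (h1.symm.trans h2)
      · exact huv (h1.symm.trans h2)
      · by_cases huw : G.s e = G.t f
        · exact hacyc [e, f] (DiGraph.two_cycle e f (he.trans hf.symm) huw.symm
            (fun hh => huv (hh.trans hf)))
        · exact hA ⟨v, G.s e, G.t f, Ne.symm huv, hvw, huw,
            ⟨e, rfl, he⟩, ⟨f, hf, rfl⟩, ⟨g, h1, h2⟩⟩
    obtain ⟨R0, hR0, hR0u⟩ := hmod
    obtain ⟨M1, hM1, hM1s⟩ := DiGraph.exists_module_subset hR1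
    obtain ⟨M2, hM2, hM2s⟩ := DiGraph.exists_module_subset hR2
    obtain ⟨x, hx⟩ := hM1.1.1
    have h12 : M1 = M2 := (hR0u M1 hM1).trans (hR0u M2 hM2).symm
    exact hdisj x (hM1s hx) (hM2s (h12 ▸ hx))
  · have hst : ∀ z, DiGraph.indeg G z = 0 ∨ DiGraph.outdeg G z = 0 := by
      intro z
      by_contra hcon
      push_neg at hcon
      exact hun ⟨z, Nat.pos_of_ne_zero hcon.1, Nat.pos_of_ne_zero hcon.2⟩
    by_cases h2in : ∃ g g' : G.E, g ≠ g' ∧ G.t g = G.t g'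
    · obtain ⟨g, g', hne, hh⟩ := h2in
      exact Or.inl (DiGraph.sink_of_two_in hA hB hU hll hconn hst
        ⟨g, g', hne, rfl, hh.symm⟩)
    · by_cases h2out : ∃ g g' : G.E, g ≠ g' ∧ G.s g = G.s g'
      · obtain ⟨g, g', hne, hh⟩ := h2out
        exact Or.inr (DiGraph.source_of_two_out hA hBrev hU hll hconn hst
          ⟨g, g', hne, rfl, hh.symm⟩)
      · push_neg at h2in h2out
        have hTinj : ∀ g g' : G.E, G.t g = G.t g' → g = g' := by
          intro g g' hh
          by_contra hne
          exact h2in g g' hne hh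
        have hSinj : ∀ g g' : G.E, G.s g = G.s g' → g = g' := by
          intro g g' hh
          by_contra hne
          exact h2out g g' hne hh
        exact Or.inl (DiGraph.sink_of_tiny hll hconn hst hTinj hSinj)
end
end

section
/- Let G be a connected loopless MP-digraph that is not a coherently oriented cycle, and suppose that G has a unique dynamical module. Then the multipath matroid M_G is isomorphic to the uniform matroid U_{1,|E(G)|}. -/
set_option autoImplicit false

noncomputable section

attribute [local instance] Classical.propDecidable

namespace UMUProof

open Finset

variable (G : DiGraph)

lemma indegIn_eq_zero_iff {R : Finset G.E} {v : G.V} :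
    G.indegIn R v = 0 ↔ ∀ e ∈ R, G.t e ≠ v := by
  simp [DiGraph.indegIn, Finset.card_eq_zero, Finset.filter_eq_empty_iff]

lemma outdegIn_eq_zero_iff {R : Finset G.E} {v : G.V} :
    G.outdegIn R v = 0 ↔ ∀ e ∈ R, G.s e ≠ v := by
  simp [DiGraph.outdegIn, Finset.card_eq_zero, Finset.filter_eq_empty_iff]

lemma unstable_mk {v : G.V} {e f : G.E} (he : G.t e = v) (hf : G.s f = v) :
    G.UnstableG v := by
  constructor
  · exact Finset.card_pos.mpr ⟨e, Finset.mem_filter.mpr ⟨Finset.mem_univ _, he⟩⟩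
  · exact Finset.card_pos.mpr ⟨f, Finset.mem_filter.mpr ⟨Finset.mem_univ _, hf⟩⟩

lemma exists_in_edge {v : G.V} (h : 0 < G.indeg v) : ∃ e, G.t e = v := by
  obtain ⟨e, he⟩ := Finset.card_pos.mp h
  exact ⟨e, (Finset.mem_filter.mp he).2⟩

lemma exists_out_edge {v : G.V} (h : 0 < G.outdeg v) : ∃ e, G.s e = v := by
  obtain ⟨e, he⟩ := Finset.card_pos.mp h
  exact ⟨e, (Finset.mem_filter.mp he).2⟩

lemma conn_pred (hconn : G.ConnectedD) (P : G.V → Prop)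
    (hcl : ∀ x y, G.adj x y → P x → P y) {v : G.V} (hv : P v) : ∀ x, P x := by
  intro x
  have h : Relation.EqvGen G.adj v x := hconn.2 v x
  have key : ∀ a b, Relation.EqvGen G.adj a b → (P a ↔ P b) := by
    intro a b hab
    induction hab with
    | rel a b hab => exact ⟨hcl a b hab, hcl b a (let ⟨e, he⟩ := hab; ⟨e, he.symm⟩)⟩
    | refl a => exact Iff.rfl
    | symm a b _ ih => exact ih.symm
    | trans a b c _ _ ih1 ih2 => exact ih1.trans ih2
  exact (key v x h).mp hv

/-- If the digraph contains a coherently oriented cycle, together with MP2 and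
connectivity it must be a coherently oriented cycle graph. -/
lemma no_cyc (hMP2 : G.MP2) (hconn : G.ConnectedD) (hll : G.Loopless)
    (hnc : ¬G.IsCohCycleGraph) : ∀ c : List G.E, ¬G.IsCohCycle c := by
  intro c hc
  obtain ⟨hne, hnd, hnds, hcyc⟩ := hc
  have hpos : 0 < c.length := List.length_pos_iff.mpr hne
  rcases Nat.lt_or_ge c.length 2 with h2 | h2
  · have h1 : c.length = 1 := by omega
    obtain ⟨e, rfl⟩ := List.length_eq_one_iff.mp h1
    have := hcyc ⟨0, by simp⟩
    simp at this
    exact hll e this.symm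
  · have hclose : ∀ f, (∃ g ∈ c, G.s g = G.s f ∨ G.s g = G.t f) → f ∈ c :=
      hMP2 c ⟨hne, hnd, hnds, hcyc⟩ h2
    have tmem : ∀ g ∈ c, ∃ g' ∈ c, G.s g' = G.t g := by
      intro g hg
      obtain ⟨i, hi⟩ := List.mem_iff_get.mp hg
      refine ⟨c.get ⟨(i.val + 1) % c.length,
        Nat.mod_lt _ (Nat.lt_of_le_of_lt (Nat.zero_le _) i.isLt)⟩, List.get_mem _ _, ?_⟩
      rw [← hi]
      exact (hcyc i).symm
    set P : G.V → Prop := fun x => ∃ g ∈ c, G.s g = x with hP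
    have hcl : ∀ x y, G.adj x y → P x → P y := by
      rintro x y ⟨h, hh⟩ ⟨g, hg, hgx⟩
      have hmem : h ∈ c := by
        refine hclose h ⟨g, hg, ?_⟩
        rcases hh with ⟨hh1, _⟩ | ⟨_, hh2⟩
        · exact Or.inl (hgx.trans hh1.symm)
        · exact Or.inr (hgx.trans hh2.symm)
      rcases hh with ⟨_, hh2⟩ | ⟨hh1, _⟩
      · obtain ⟨g', hg', hgs⟩ := tmem h hmem
        exact ⟨g', hg', hgs.trans hh2⟩
      · exact ⟨h, hmem, hh1⟩
    have base : P (G.s (c.get ⟨0, hpos⟩)) := ⟨_, List.get_mem _ _, rfl⟩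
    have hall := conn_pred G hconn P hcl base
    refine hnc ⟨c, ⟨hne, hnd, hnds, hcyc⟩, ?_, fun v => hall v⟩
    intro f
    obtain ⟨g, hg, hgs⟩ := hall (G.s f)
    exact hclose f ⟨g, hg, Or.inl hgs⟩

/-- If `a` has two distinct out-edges, then every edge into a target of an
out-edge of `a` also comes from `a`. -/
lemma star_out (hU : G.EdgeUnique) (hA : ¬G.HasPatternA) (hB : ¬G.HasPatternB)
    (hll : G.Loopless) {a : G.V} {h1 h2 : G.E} (h12 : h1 ≠ h2)
    (hs1 : G.s h1 = a) (hs2 : G.s h2 = a) :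
    ∀ k, G.s k = a → ∀ h, G.t h = G.t k → G.s h = a := by
  intro k hk h hth
  by_contra hx
  have hxw : G.s h ≠ G.t k := fun hh => hll h (hh.trans hth.symm)
  have haw : a ≠ G.t k := fun hh => hll k (hk.trans hh)
  have hts : G.t h1 ≠ G.t h2 := fun hEq =>
    h12 (hU h1 h2 (hs1.trans hs2.symm) hEq (hll h1))
  obtain ⟨k', hk'a, hk'w⟩ : ∃ k', G.s k' = a ∧ G.t k' ≠ G.t k := by
    by_cases hcase : G.t h1 = G.t k
    · exact ⟨h2, hs2, fun hh => hts (hcase.trans hh.symm)⟩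
    · exact ⟨h1, hs1, hcase⟩
  have hk'na : G.t k' ≠ a := fun hh => hll k' (hk'a.trans hh.symm)
  by_cases hxd : G.s h = G.t k'
  · exact hA ⟨G.t k', a, G.t k, hk'na, hk'w, haw,
      ⟨k', hk'a, rfl⟩, ⟨h, hxd, hth⟩, ⟨k, hk, rfl⟩⟩
  · exact hB ⟨G.s h, G.t k, a, G.t k', hxw, hx, hxd,
      fun hh => haw hh.symm, fun hh => hk'w hh.symm, fun hh => hk'na hh.symm,
      ⟨h, rfl, hth⟩, ⟨k, hk, rfl⟩, ⟨k', hk'a, rfl⟩⟩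

/-- If `w` has two distinct in-edges, then every edge out of a source of an
in-edge of `w` also goes into `w`. -/
lemma star_in (hU : G.EdgeUnique) (hA : ¬G.HasPatternA) (hB : ¬G.HasPatternB)
    (hll : G.Loopless) {w : G.V} {k1 k2 : G.E} (h12 : k1 ≠ k2)
    (ht1 : G.t k1 = w) (ht2 : G.t k2 = w) :
    ∀ k, G.t k = w → ∀ h, G.s h = G.s k → G.t h = w := by
  intro k hk h hsh
  by_contra hx
  have hxs : G.t h ≠ G.s k := fun hh => hll h (hsh.trans hh.symm)
  have hsw : G.s k ≠ w := fun hh => hll k (hh.trans hk.symm)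
  have hss : G.s k1 ≠ G.s k2 := fun hEq =>
    h12 (hU k1 k2 hEq (ht1.trans ht2.symm) (hll k1))
  obtain ⟨k', hk'w, hk's⟩ : ∃ k', G.t k' = w ∧ G.s k' ≠ G.s k := by
    by_cases hcase : G.s k1 = G.s k
    · exact ⟨k2, ht2, fun hh => hss (hcase.trans hh.symm)⟩
    · exact ⟨k1, ht1, hcase⟩
  have hk'nw : G.s k' ≠ w := fun hh => hll k' (hh.trans hk'w.symm)
  by_cases hcd : G.s k' = G.t h
  · exact hA ⟨G.t h, G.s k, w, fun hh => hxs hh, hx, hsw,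
      ⟨h, hsh, rfl⟩, ⟨k', hcd, hk'w⟩, ⟨k, rfl, hk⟩⟩
  · exact hB ⟨G.s k', w, G.s k, G.t h, hk'nw, hk's, hcd,
      fun hh => hsw hh.symm, fun hh => hx hh.symm, fun hh => hxs hh.symm,
      ⟨k', rfl, hk'w⟩, ⟨k, rfl, hk⟩, ⟨h, hsh, rfl⟩⟩

/-- If some vertex is unstable, we can construct a proper dynamical region. -/
lemma exists_proper_region (hU : G.EdgeUnique) (hA : ¬G.HasPatternA)
    (hB : ¬G.HasPatternB) (hll : G.Loopless)
    (hNoCyc : ∀ c : List G.E, ¬G.IsCohCycle c) {v : G.V}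
    (hv : G.UnstableG v) : ∃ R : Finset G.E, G.IsDynRegion R ∧ R ≠ Finset.univ := by
  obtain ⟨hin, hout⟩ := hv
  obtain ⟨p, hp⟩ := exists_in_edge G hin
  obtain ⟨q, hq⟩ := exists_out_edge G hout
  have hav : G.s p ≠ v := fun hh => hll p (hh.trans hp.symm)
  by_cases hUin : ∀ e1 e2 : G.E, G.t e1 = v → G.t e2 = v → e1 = e2
  · by_cases hUout : ∀ h1 h2 : G.E, G.s h1 = G.s p → G.s h2 = G.s p → h1 = h2
    · -- R = {p}
      refine ⟨({p} : Finset G.E), ⟨⟨p, Finset.mem_singleton_self p⟩, ?_, ?_, ?_⟩, ?_⟩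
      · intro e he f hf
        rw [Finset.mem_singleton] at he hf
        subst he; subst hf
        exact Relation.EqvGen.refl _
      · intro x ⟨k, hk, hkx⟩ ⟨h, hh, hhx⟩
        rw [Finset.mem_singleton] at hk
        rw [hk] at hkx
        have hhns : h ∉ ({p} : Finset G.E) := (Finset.mem_sdiff.mp hh).2
        rcases hkx with hkx | hkx
        · -- x = s p
          subst hkx
          have hth : G.t h = G.s p := by
            rcases hhx with hhx | hhx
            · exact absurd (Finset.mem_singleton.mpr (hUout h p hhx rfl)) hhns
            · exact hhx
          refine ⟨unstable_mk G hth rfl, Or.inl ?_, Or.inr ?_⟩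
          · rw [indegIn_eq_zero_iff]
            intro e he
            rw [Finset.mem_singleton] at he; subst he
            rw [hp]
            exact fun hh => hav hh.symm
          · rw [outdegIn_eq_zero_iff]
            intro e he hse
            exact (Finset.mem_sdiff.mp he).2 (Finset.mem_singleton.mpr (hUout e p hse rfl))
        · -- x = v
          have hxv : x = v := by rw [← hkx, hp]
          subst hxv
          refine ⟨unstable_mk G hp hq, Or.inr ?_, Or.inl ?_⟩
          · rw [outdegIn_eq_zero_iff]
            intro e he
            rw [Finset.mem_singleton] at he; subst he
            exact hav
          · rw [indegIn_eq_zero_iff]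
            intro e he hte
            exact (Finset.mem_sdiff.mp he).2 (Finset.mem_singleton.mpr (hUin e p hte hp))
      · intro c hc
        exact absurd hc (hNoCyc c)
      · intro hEq
        have : q ∈ ({p} : Finset G.E) := hEq ▸ Finset.mem_univ q
        rw [Finset.mem_singleton] at this
        subst this
        exact hav hq
    · -- R = out-star of a := s p
      push_neg at hUout
      obtain ⟨h1, h2, hs1, hs2, h12⟩ := hUout
      have K := star_out G hU hA hB hll h12 hs1 hs2
      set a := G.s p with ha
      set R : Finset G.E := Finset.univ.filter (fun e => G.s e = a) with hR
      have hmem : ∀ {e : G.E}, e ∈ R ↔ G.s e = a := by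
        intro e; simp [hR]
      refine ⟨R, ⟨⟨p, hmem.mpr rfl⟩, ?_, ?_, ?_⟩, ?_⟩
      · intro e he f hf
        have : G.s e = G.s f := (hmem.mp he).trans (hmem.mp hf).symm
        rw [this]
        exact Relation.EqvGen.refl _
      · intro x ⟨k, hk, hkx⟩ ⟨h, hh, hhx⟩
        have hka := hmem.mp hk
        have hhns : h ∉ R := (Finset.mem_sdiff.mp hh).2
        rcases hkx with hkx | hkx
        · -- x = a
          have hxa : x = a := by rw [← hkx, hka]
          subst hxa
          have hth : G.t h = a := by
            rcases hhx with hhx | hhx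
            · exact absurd (hmem.mpr hhx) hhns
            · exact hhx
          refine ⟨unstable_mk G hth hka, Or.inl ?_, Or.inr ?_⟩
          · rw [indegIn_eq_zero_iff]
            intro e he hte
            exact hll e ((hmem.mp he).trans hte.symm)
          · rw [outdegIn_eq_zero_iff]
            intro e he hse
            exact (Finset.mem_sdiff.mp he).2 (hmem.mpr hse)
        · -- x = t k
          subst hkx
          have hsh : G.s h = G.t k := by
            rcases hhx with hhx | hhx
            · exact hhx
            · exact absurd (hmem.mpr (K k hka h hhx)) hhns
          have haw : a ≠ G.t k := fun hh => hll k (hka.trans hh)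
          refine ⟨unstable_mk G rfl hsh, Or.inr ?_, Or.inl ?_⟩
          · rw [outdegIn_eq_zero_iff]
            intro e he hse
            exact haw ((hmem.mp he).symm.trans hse)
          · rw [indegIn_eq_zero_iff]
            intro e he hte
            exact (Finset.mem_sdiff.mp he).2 (hmem.mpr (K k hka e hte))
      · intro c hc
        exact absurd hc (hNoCyc c)
      · intro hEq
        have : q ∈ R := hEq ▸ Finset.mem_univ q
        exact hav (hq.symm.trans (hmem.mp this)).symm
  · -- R = in-star of v
    push_neg at hUin
    obtain ⟨e1, e2, ht1, ht2, h12⟩ := hUin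
    have K := star_in G hU hA hB hll h12 ht1 ht2
    set R : Finset G.E := Finset.univ.filter (fun e => G.t e = v) with hR
    have hmem : ∀ {e : G.E}, e ∈ R ↔ G.t e = v := by
      intro e; simp [hR]
    refine ⟨R, ⟨⟨p, hmem.mpr hp⟩, ?_, ?_, ?_⟩, ?_⟩
    · intro e he f hf
      refine Relation.EqvGen.trans _ v _
        (Relation.EqvGen.rel _ _ ⟨e, he, Or.inl ⟨rfl, hmem.mp he⟩⟩)
        (Relation.EqvGen.symm _ _
          (Relation.EqvGen.rel _ _ ⟨f, hf, Or.inl ⟨rfl, hmem.mp hf⟩⟩))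
    · intro x ⟨k, hk, hkx⟩ ⟨h, hh, hhx⟩
      have hkv := hmem.mp hk
      have hhns : h ∉ R := (Finset.mem_sdiff.mp hh).2
      rcases hkx with hkx | hkx
      · -- x = s k
        subst hkx
        have hth : G.t h = G.s k := by
          rcases hhx with hhx | hhx
          · exact absurd (hmem.mpr (K k hkv h hhx)) hhns
          · exact hhx
        have hsv : G.s k ≠ v := fun hh' => hll k (hh'.trans hkv.symm)
        refine ⟨unstable_mk G hth rfl, Or.inl ?_, Or.inr ?_⟩
        · rw [indegIn_eq_zero_iff]
          intro e he hte
          exact hsv ((hmem.mp he).symm.trans hte).symm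
        · rw [outdegIn_eq_zero_iff]
          intro e he hse
          exact (Finset.mem_sdiff.mp he).2 (hmem.mpr (K k hkv e hse))
      · -- x = v
        have hxv : x = v := by rw [← hkx, hkv]
        subst hxv
        refine ⟨unstable_mk G hp hq, Or.inr ?_, Or.inl ?_⟩
        · rw [outdegIn_eq_zero_iff]
          intro e he hse
          exact hll e (hse.trans (hmem.mp he).symm)
        · rw [indegIn_eq_zero_iff]
          intro e he hte
          exact (Finset.mem_sdiff.mp he).2 (hmem.mpr hte)
    · intro c hc
      exact absurd hc (hNoCyc c)
    · intro hEq
      have : q ∈ R := hEq ▸ Finset.mem_univ q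
      exact hll q (hq.trans (hmem.mp this).symm)

/-- Each connected piece of the complement of a dynamical region is again a
dynamical region (given that there are no coherent cycles at all). -/
lemma component_region (hNoCyc : ∀ c : List G.E, ¬G.IsCohCycle c)
    {T : Finset G.E} (hT : G.IsDynRegion T) {g : G.E} (hg : g ∉ T) :
    ∃ S' : Finset G.E, G.IsDynRegion S' ∧ ∀ e ∈ S', e ∉ T := by
  classical
  set C : Finset G.E := Finset.univ \ T with hC
  have hmemC : ∀ {e : G.E}, e ∈ C ↔ e ∉ T := by
    intro e; simp [hC]
  set sh : G.E → G.E → Prop := fun e f =>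
    G.s e = G.s f ∨ G.s e = G.t f ∨ G.t e = G.s f ∨ G.t e = G.t f with hsh
  set rel : G.E → G.E → Prop := fun e f => e ∈ C ∧ f ∈ C ∧ sh e f with hrel
  set S' : Finset G.E := C.filter (fun f => Relation.ReflTransGen rel g f) with hS'
  have hmemS' : ∀ {e : G.E}, e ∈ S' ↔ e ∈ C ∧ Relation.ReflTransGen rel g e := by
    intro e; simp [hS']
  have hgC : g ∈ C := hmemC.mpr hg
  have hgS' : g ∈ S' := hmemS'.mpr ⟨hgC, Relation.ReflTransGen.refl⟩
  have hstep : ∀ {e f : G.E}, e ∈ S' → f ∈ C → sh e f → f ∈ S' := by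
    intro e f he hf hsh'
    obtain ⟨heC, hre⟩ := hmemS'.mp he
    exact hmemS'.mpr ⟨hf, hre.tail ⟨heC, hf, hsh'⟩⟩
  have hvx : ∀ {x : G.V} {k h : G.E}, k ∈ S' → (G.s k = x ∨ G.t k = x) →
      h ∈ C → (G.s h = x ∨ G.t h = x) → h ∈ S' := by
    intro x k h hk hkx hh hhx
    refine hstep hk hh ?_
    rcases hkx with hkx | hkx <;> rcases hhx with hhx | hhx
    · exact Or.inl (hkx.trans hhx.symm)
    · exact Or.inr (Or.inl (hkx.trans hhx.symm))
    · exact Or.inr (Or.inr (Or.inl (hkx.trans hhx.symm)))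
    · exact Or.inr (Or.inr (Or.inr (hkx.trans hhx.symm)))
  refine ⟨S', ⟨⟨g, hgS'⟩, ?_, ?_, ?_⟩, fun e he => hmemC.mp (hmemS'.mp he).1⟩
  · -- EdgeConnected
    have reach : ∀ f : G.E, Relation.ReflTransGen rel g f →
        Relation.EqvGen (G.adjIn S') (G.s g) (G.s f) := by
      intro f hf
      induction hf with
      | refl => exact Relation.EqvGen.refl _
      | @tail b c hgb hbc ih =>
        obtain ⟨hbC, hcC, hshbc⟩ := hbc
        have hbS' : b ∈ S' := hmemS'.mpr ⟨hbC, hgb⟩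
        have hcS' : c ∈ S' := hmemS'.mpr ⟨hcC, Relation.ReflTransGen.tail hgb ⟨hbC, hcC, hshbc⟩⟩
        have hb : Relation.EqvGen (G.adjIn S') (G.s b) (G.t b) :=
          Relation.EqvGen.rel _ _ ⟨b, hbS', Or.inl ⟨rfl, rfl⟩⟩
        have hc : Relation.EqvGen (G.adjIn S') (G.s c) (G.t c) :=
          Relation.EqvGen.rel _ _ ⟨c, hcS', Or.inl ⟨rfl, rfl⟩⟩
        refine Relation.EqvGen.trans _ _ _ ih ?_
        rcases hshbc with h' | h' | h' | h'
        · rw [h']; exact Relation.EqvGen.refl _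
        · rw [h']; exact Relation.EqvGen.symm _ _ hc
        · rw [← h']; exact hb
        · rw [← h'] at hc; exact Relation.EqvGen.trans _ _ _ hb (Relation.EqvGen.symm _ _ hc)
    intro e he f hf
    exact Relation.EqvGen.trans _ _ _
      (Relation.EqvGen.symm _ _ (reach e (hmemS'.mp he).2))
      (reach f (hmemS'.mp hf).2)
  · -- boundary
    intro x ⟨k, hk, hkx⟩ ⟨h, hh, hhx⟩
    have hhns : h ∉ S' := (Finset.mem_sdiff.mp hh).2
    have hhT : h ∈ T := by
      by_contra hhT
      exact hhns (hvx hk hkx (hmemC.mpr hhT) hhx)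
    have hxT : G.IncidentTo T x := ⟨h, hhT, hhx⟩
    have hxC : G.IncidentTo (Finset.univ \ T) x := ⟨k, (hmemS'.mp hk).1, hkx⟩
    obtain ⟨hu, hsT, hsC⟩ := hT.2.2.1 x hxT hxC
    have hsub : S' ⊆ Finset.univ \ T := fun e he => (hmemS'.mp he).1
    refine ⟨hu, ?_, ?_⟩
    · rcases hsC with h0 | h0
      · left
        have hle : G.indegIn S' x ≤ G.indegIn (Finset.univ \ T) x :=
          Finset.card_le_card (Finset.filter_subset_filter _ hsub)
        omega
      · right
        have hle : G.outdegIn S' x ≤ G.outdegIn (Finset.univ \ T) x :=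
          Finset.card_le_card (Finset.filter_subset_filter _ hsub)
        omega
    · have hEqset : ∀ (pred : G.E → Prop),
          (Finset.univ \ S').filter (fun e => G.t e = x) =
            T.filter (fun e => G.t e = x) := fun _ => by
        ext e
        simp only [Finset.mem_filter, Finset.mem_sdiff, Finset.mem_univ, true_and]
        constructor
        · rintro ⟨heS, hte⟩
          refine ⟨?_, hte⟩
          by_contra heT
          exact heS (hvx hk hkx (hmemC.mpr heT) (Or.inr hte))
        · rintro ⟨heT, hte⟩
          exact ⟨fun heS => (hmemC.mp (hmemS'.mp heS).1) heT, hte⟩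
      have hEqset' : (Finset.univ \ S').filter (fun e => G.s e = x) =
          T.filter (fun e => G.s e = x) := by
        ext e
        simp only [Finset.mem_filter, Finset.mem_sdiff, Finset.mem_univ, true_and]
        constructor
        · rintro ⟨heS, hte⟩
          refine ⟨?_, hte⟩
          by_contra heT
          exact heS (hvx hk hkx (hmemC.mpr heT) (Or.inl hte))
        · rintro ⟨heT, hte⟩
          exact ⟨fun heS => (hmemC.mp (hmemS'.mp heS).1) heT, hte⟩
      rcases hsT with h0 | h0
      · left
        show (Finset.filter _ _).card = 0
        rw [hEqset (fun _ => True)]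
        exact h0
      · right
        show (Finset.filter _ _).card = 0
        rw [hEqset']
        exact h0
  · intro c hc
    exact absurd hc (hNoCyc c)

/-- Every dynamical region contains a dynamical module. -/
lemma region_module {S : Finset G.E} (hS : G.IsDynRegion S) :
    ∃ T, T ⊆ S ∧ G.IsDynModule T := by
  classical
  obtain ⟨T, hTmem, hTmin⟩ := Finset.exists_min_image
    (S.powerset.filter (fun R => G.IsDynRegion R)) Finset.card
    ⟨S, Finset.mem_filter.mpr ⟨Finset.mem_powerset_self S, hS⟩⟩
  have hTsub : T ⊆ S := Finset.mem_powerset.mp (Finset.mem_filter.mp hTmem).1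
  refine ⟨T, hTsub, (Finset.mem_filter.mp hTmem).2, ?_⟩
  intro R' hR'T hR'
  exact Finset.eq_of_subset_of_card_le hR'T
    (hTmin R' (Finset.mem_filter.mpr ⟨Finset.mem_powerset.mpr (hR'T.trans hTsub), hR'⟩))

/-- In a connected digraph with no unstable vertices, satisfying (MP1) and
edge-uniqueness, there is no pair of edges with distinct sources and distinct
targets. -/
lemma no_two_multipath (hU : G.EdgeUnique) (hA : ¬G.HasPatternA)
    (hB : ¬G.HasPatternB) (hll : G.Loopless) (hconn : G.ConnectedD)
    (hns : ∀ e f : G.E, G.t e ≠ G.s f) {e f : G.E}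
    (hse : G.s e ≠ G.s f) (hte : G.t e ≠ G.t f) : False := by
  by_cases hOut : ∃ g1 g2 : G.E, g1 ≠ g2 ∧ G.s g1 = G.s g2
  · obtain ⟨g1, g2, h12, hs⟩ := hOut
    have K := star_out G hU hA hB hll h12 rfl hs.symm
    set P : G.V → Prop := fun x => x = G.s g1 ∨ ∃ k, G.s k = G.s g1 ∧ G.t k = x with hP
    have hPsrc : ∀ h : G.E, P (G.s h) → G.s h = G.s g1 := by
      intro h hp
      rcases hp with h' | ⟨k, hk, htk⟩
      · exact h'
      · exact absurd htk (hns k h)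
    have hcl : ∀ x y, G.adj x y → P x → P y := by
      rintro x y ⟨h, hh⟩ hx
      rcases hh with ⟨hh1, hh2⟩ | ⟨hh1, hh2⟩
      · exact Or.inr ⟨h, hPsrc h (hh1 ▸ hx), hh2⟩
      · rcases hx with h' | ⟨k, hk, htk⟩
        · exact absurd (hh2.trans h') (hns h g1)
        · exact Or.inl (hh1 ▸ K k hk h (hh2.trans htk.symm))
    have hall := conn_pred G hconn P hcl (Or.inl rfl : P (G.s g1))
    exact hse ((hPsrc e (hall _)).trans (hPsrc f (hall _)).symm)
  · by_cases hIn : ∃ g1 g2 : G.E, g1 ≠ g2 ∧ G.t g1 = G.t g2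
    · obtain ⟨g1, g2, h12, ht⟩ := hIn
      have K := star_in G hU hA hB hll h12 rfl ht.symm
      set P : G.V → Prop := fun x => x = G.t g1 ∨ ∃ k, G.t k = G.t g1 ∧ G.s k = x with hP
      have hPtgt : ∀ h : G.E, P (G.t h) → G.t h = G.t g1 := by
        intro h hp
        rcases hp with h' | ⟨k, hk, hsk⟩
        · exact h'
        · exact absurd hsk.symm (hns h k)
      have hcl : ∀ x y, G.adj x y → P x → P y := by
        rintro x y ⟨h, hh⟩ hx
        rcases hh with ⟨hh1, hh2⟩ | ⟨hh1, hh2⟩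
        · rcases hx with h' | ⟨k, hk, hsk⟩
          · exact absurd (hh1.trans h').symm (hns g1 h)
          · exact Or.inl (hh2.symm.trans (K k hk h (hh1.trans hsk.symm)))
        · exact Or.inr ⟨h, hPtgt h (by rw [hh2]; exact hx), hh1⟩
      have hall := conn_pred G hconn P hcl (Or.inl rfl : P (G.t g1))
      exact hte ((hPtgt e (hall _)).trans (hPtgt f (hall _)).symm)
    · push_neg at hOut hIn
      set P : G.V → Prop := fun x => x = G.s e ∨ x = G.t e with hP
      have hcl : ∀ x y, G.adj x y → P x → P y := by
        rintro x y ⟨h, hh⟩ hx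
        rcases hh with ⟨hh1, hh2⟩ | ⟨hh1, hh2⟩
        · rcases hx with h' | h'
          · have heq : h = e := by
              by_contra hne
              exact hOut h e hne (hh1.trans h')
            exact Or.inr (heq ▸ hh2).symm
          · exact absurd (hh1.trans h').symm (hns e h)
        · rcases hx with h' | h'
          · exact absurd (hh2.trans h') (hns h e)
          · have heq : h = e := by
              by_contra hne
              exact hIn h e hne (hh2.trans h')
            exact Or.inl (heq ▸ hh1).symm
      have hall := conn_pred G hconn P hcl (Or.inl rfl : P (G.s e))
      rcases hall (G.s f) with h' | h'
      · exact hse h'.symm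
      · exact hns e f h'.symm

end UMUProof

/-- A connected loopless MP-digraph which is not a coherently
oriented cycle and has a unique dynamical module has multipath matroid
isomorphic to the uniform matroid `U_{1,|E(G)|}` (on ground set
`{1,…,|E(G)|}`, independent sets = subsets of cardinality at most 1). -/
theorem unique_module_uniform_matroid (G : DiGraph) (hU : G.EdgeUnique)
    (hMP : G.IsMPDigraph) (hconn : G.ConnectedD) (hll : G.Loopless)
    (hnc : ¬G.IsCohCycleGraph)
    (hmod : ∃! R : Finset G.E, DiGraph.IsDynModule G R) :
    ∃ φ : G.E ≃ Fin (Fintype.card G.E),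
      ∀ m : Finset G.E, G.IsMultipath m ↔ (m.image φ).card ≤ 1 := by
  classical
  obtain ⟨⟨hA, hArev, hB, hBrev⟩, hMP2⟩ := hMP
  have hNoCyc := UMUProof.no_cyc G hMP2 hconn hll hnc
  obtain ⟨R₀, hR₀, huniq⟩ := hmod
  have noProper : ∀ S : Finset G.E, G.IsDynRegion S → S = Finset.univ := by
    intro S hS
    by_contra hne
    obtain ⟨g, hgS⟩ : ∃ g, g ∉ S := by
      by_contra h
      push_neg at h
      exact hne (Finset.eq_univ_iff_forall.mpr h)
    obtain ⟨T, hTS, hTmod⟩ := UMUProof.region_module G hS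
    have hT0 : T = R₀ := huniq T hTmod
    have hgT : g ∉ T := fun h => hgS (hTS h)
    obtain ⟨S', hS'reg, hS'disj⟩ := UMUProof.component_region G hNoCyc hTmod.1 hgT
    obtain ⟨T', hT'S', hT'mod⟩ := UMUProof.region_module G hS'reg
    have hT'0 : T' = R₀ := huniq T' hT'mod
    obtain ⟨x, hx⟩ := hT'mod.1.1
    have hxT : x ∈ T := by
      rw [hT0, ← hT'0]
      exact hx
    exact hS'disj x (hT'S' hx) hxT
  have hns : ∀ e f : G.E, G.t e ≠ G.s f := by
    intro e f h
    have hv : G.UnstableG (G.s f) := UMUProof.unstable_mk G h rfl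
    obtain ⟨R, hR, hRne⟩ := UMUProof.exists_proper_region G hU hA hB hll hNoCyc hv
    exact hRne (noProper R hR)
  refine ⟨Fintype.equivFin G.E, fun m => ?_⟩
  rw [Finset.card_image_of_injective m (Fintype.equivFin G.E).injective]
  constructor
  · rintro ⟨hloop, hsinj, htinj, -⟩
    refine Finset.card_le_one.mpr fun a ha b hb => ?_
    by_contra hab
    exact UMUProof.no_two_multipath G hU hA hB hll hconn hns
      (fun h => hab (hsinj a ha b hb h)) (fun h => hab (htinj a ha b hb h))
  · intro h1
    refine ⟨fun e _ => hll e, fun a ha b hb _ => Finset.card_le_one.mp h1 a ha b hb,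
      fun a ha b hb _ => Finset.card_le_one.mp h1 a ha b hb, ?_⟩
    rintro ⟨c, hc, -⟩
    exact hNoCyc c hc
end
end

section
/- Let G be an MP-digraph. Then its multipath matroid M_G is isomorphic to a direct sum of uniform matroids. -/
set_option autoImplicit false

noncomputable section

attribute [local instance] Classical.propDecidable

namespace MPAux
open DiGraph

variable (G : DiGraph)

/-- cyclic `get` into a list. -/
def cg (c : List G.E) (h : 0 < c.length) (i : ℕ) : G.E :=
  c.get ⟨i % c.length, Nat.mod_lt _ h⟩

lemma cg_mem (c : List G.E) (h : 0 < c.length) (i : ℕ) : cg G c h i ∈ c :=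
  List.get_mem _ _

lemma mem_cg (c : List G.E) (h : 0 < c.length) {g : G.E} (hg : g ∈ c) :
    ∃ i, i < c.length ∧ cg G c h i = g := by
  obtain ⟨n, hn⟩ := List.mem_iff_get.mp hg
  refine ⟨n.val, n.isLt, ?_⟩
  unfold cg
  rw [← hn]
  congr 1
  exact Fin.ext (Nat.mod_eq_of_lt n.isLt)

lemma cg_succ (c : List G.E) (hc : G.IsCohCycle c) (h : 0 < c.length) (i : ℕ) :
    G.t (cg G c h i) = G.s (cg G c h (i + 1)) := by
  have hfin : (⟨(i % c.length + 1) % c.length, Nat.mod_lt _ h⟩ : Fin c.length) =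
      ⟨(i + 1) % c.length, Nat.mod_lt _ h⟩ := Fin.ext (Nat.mod_add_mod i c.length 1)
  have key := hc.2.2.2 ⟨i % c.length, Nat.mod_lt _ h⟩
  unfold cg
  rw [key]
  exact congrArg (fun x => G.s (c.get x)) hfin

lemma cg_src_inj (c : List G.E) (hc : G.IsCohCycle c) (h : 0 < c.length) {i j : ℕ}
    (hij : G.s (cg G c h i) = G.s (cg G c h j)) : i % c.length = j % c.length := by
  have hnd := hc.2.2.1
  have hlt : ∀ x : ℕ, x % c.length < (c.map G.s).length := by
    intro x; rw [List.length_map]; exact Nat.mod_lt _ h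
  have h1 : (c.map G.s).get ⟨i % c.length, hlt i⟩ = (c.map G.s).get ⟨j % c.length, hlt j⟩ := by
    simp only [List.get_eq_getElem, List.getElem_map]
    exact hij
  have := hnd.get_inj_iff.mp h1
  simpa using congrArg Fin.val this

lemma succ_mod_inj {n i j : ℕ} (hi : i < n) (hj : j < n)
    (h : (i + 1) % n = (j + 1) % n) : i = j := by
  rcases Nat.lt_or_ge (i + 1) n with h1 | h1 <;> rcases Nat.lt_or_ge (j + 1) n with h2 | h2
  · rw [Nat.mod_eq_of_lt h1, Nat.mod_eq_of_lt h2] at h; omega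
  · have hj1 : j + 1 = n := by omega
    rw [Nat.mod_eq_of_lt h1, hj1, Nat.mod_self] at h; omega
  · have hi1 : i + 1 = n := by omega
    rw [hi1, Nat.mod_self, Nat.mod_eq_of_lt h2] at h; omega
  · omega

lemma cg_eq_of_mod (c : List G.E) (h : 0 < c.length) {i j : ℕ}
    (hij : i % c.length = j % c.length) : cg G c h i = cg G c h j := by
  unfold cg; congr 1; exact Fin.ext hij

lemma cycle_nonloop (c : List G.E) (hc : G.IsCohCycle c) (h : 0 < c.length)
    (h2 : 2 ≤ c.length) (i : ℕ) : G.s (cg G c h i) ≠ G.t (cg G c h i) := by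
  intro hloop
  have hsucc := cg_succ G c hc h i
  have heq : G.s (cg G c h i) = G.s (cg G c h (i + 1)) := hloop.trans hsucc
  have hmod := cg_src_inj G c hc h heq
  have hr : i % c.length < c.length := Nat.mod_lt _ h
  rcases Nat.lt_or_ge (i % c.length + 1) c.length with hlt | hge
  · rw [← Nat.mod_add_mod, Nat.mod_eq_of_lt hlt] at hmod; omega
  · have hn : i % c.length + 1 = c.length := by omega
    rw [← Nat.mod_add_mod, hn, Nat.mod_self] at hmod
    omega

lemma src_inj_mem (c : List G.E) (hc : G.IsCohCycle c) (h : 0 < c.length)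
    {g g' : G.E} (hg : g ∈ c) (hg' : g' ∈ c) (hss : G.s g = G.s g') : g = g' := by
  obtain ⟨i, hi, rfl⟩ := mem_cg G c h hg
  obtain ⟨j, hj, rfl⟩ := mem_cg G c h hg'
  exact cg_eq_of_mod G c h (cg_src_inj G c hc h hss)

lemma tgt_inj_mem (c : List G.E) (hc : G.IsCohCycle c) (h : 0 < c.length)
    {g g' : G.E} (hg : g ∈ c) (hg' : g' ∈ c) (htt : G.t g = G.t g') : g = g' := by
  obtain ⟨i, hi, rfl⟩ := mem_cg G c h hg
  obtain ⟨j, hj, rfl⟩ := mem_cg G c h hg'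
  have h1 : G.s (cg G c h (i + 1)) = G.s (cg G c h (j + 1)) := by
    rw [← cg_succ G c hc h i, ← cg_succ G c hc h j]; exact htt
  have h2 := cg_src_inj G c hc h h1
  have h3 : i = j := succ_mod_inj hi hj h2
  rw [h3]

lemma mem_of_tgt (hMP2 : G.MP2) (c : List G.E) (hc : G.IsCohCycle c) (h2 : 2 ≤ c.length)
    {f g : G.E} (hg : g ∈ c) (ht : G.t g = G.t f) : f ∈ c := by
  have h : 0 < c.length := by omega
  obtain ⟨i, hi, rfl⟩ := mem_cg G c h hg
  refine hMP2 c hc h2 f ⟨cg G c h (i + 1), cg_mem G c h (i + 1), Or.inr ?_⟩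
  rw [← cg_succ G c hc h i, ht]

lemma cycle_subset (hMP2 : G.MP2) {c c' : List G.E} (hc : G.IsCohCycle c)
    (hc' : G.IsCohCycle c') (h2 : 2 ≤ c.length) (h2' : 2 ≤ c'.length)
    {f : G.E} (hf : f ∈ c) (hf' : f ∈ c') : ∀ g ∈ c, g ∈ c' := by
  have h : 0 < c.length := by omega
  have h' : 0 < c'.length := by omega
  obtain ⟨i0, hi0lt, hi0⟩ := mem_cg G c h hf
  have key : ∀ k : ℕ, cg G c h (i0 + k) ∈ c' := by
    intro k
    induction k with
    | zero => rw [Nat.add_zero, hi0]; exact hf'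
    | succ k ih =>
      obtain ⟨j, hjlt, hj⟩ := mem_cg G c' h' ih
      refine hMP2 c' hc' h2' _ ⟨cg G c' h' (j + 1), cg_mem G c' h' (j + 1), Or.inl ?_⟩
      rw [← cg_succ G c' hc' h' j, hj]
      exact cg_succ G c hc h (i0 + k)
  intro g hg
  obtain ⟨j, hjlt, hj⟩ := mem_cg G c h hg
  have hk := key (j + c.length - i0)
  have heq : (i0 + (j + c.length - i0)) % c.length = j % c.length := by
    have : i0 + (j + c.length - i0) = j + c.length := by omega
    rw [this, Nat.add_mod_right]
  rw [cg_eq_of_mod G c h heq, hj] at hk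
  exact hk

lemma cycle_toFinset_eq (hMP2 : G.MP2) {c c' : List G.E} (hc : G.IsCohCycle c)
    (hc' : G.IsCohCycle c') (h2 : 2 ≤ c.length) (h2' : 2 ≤ c'.length)
    {f : G.E} (hf : f ∈ c) (hf' : f ∈ c') : c.toFinset = c'.toFinset := by
  ext g
  simp only [List.mem_toFinset]
  constructor
  · exact cycle_subset G hMP2 hc hc' h2 h2' hf hf' g
  · exact cycle_subset G hMP2 hc' hc h2' h2 hf' hf g

/-- `e` lies on a coherently oriented cycle of length at least 2. -/
def CycE (e : G.E) : Prop := ∃ c : List G.E, G.IsCohCycle c ∧ 2 ≤ c.length ∧ e ∈ c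

lemma cycE_nonloop {e : G.E} (h : CycE G e) : G.s e ≠ G.t e := by
  obtain ⟨c, hc, h2, he⟩ := h
  have h0 : 0 < c.length := by omega
  obtain ⟨i, hi, rfl⟩ := mem_cg G c h0 he
  exact cycle_nonloop G c hc h0 h2 i

def outBlk (v : G.V) : Finset G.E :=
  Finset.univ.filter fun f => G.s f = v ∧ G.s f ≠ G.t f ∧ ¬ CycE G f

def inBlk (v : G.V) : Finset G.E :=
  Finset.univ.filter fun f => G.t f = v ∧ G.s f ≠ G.t f ∧ ¬ CycE G f

lemma mem_outBlk {v : G.V} {f : G.E} :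
    f ∈ outBlk G v ↔ G.s f = v ∧ G.s f ≠ G.t f ∧ ¬ CycE G f := by
  simp [outBlk]

lemma mem_inBlk {v : G.V} {f : G.E} :
    f ∈ inBlk G v ↔ G.t f = v ∧ G.s f ≠ G.t f ∧ ¬ CycE G f := by
  simp [inBlk]

def SrcMate (e : G.E) : Prop := ∃ f, f ≠ e ∧ f ∈ outBlk G (G.s e)
def TgtMate (e : G.E) : Prop := ∃ f, f ≠ e ∧ f ∈ inBlk G (G.t e)

noncomputable def blk (e : G.E) : Finset G.E :=
  if G.s e = G.t e then {e}
  else if h : CycE G e then h.choose.toFinset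
  else if SrcMate G e then outBlk G (G.s e)
  else if TgtMate G e then inBlk G (G.t e)
  else {e}

noncomputable def kfun (B : Finset G.E) : ℕ :=
  if ∃ e ∈ B, G.s e = G.t e then 0
  else if ∃ e ∈ B, CycE G e then B.card - 1
  else 1

lemma not_both_mates (hU : G.EdgeUnique) (hMP1 : G.MP1) (e : G.E)
    (hl : G.s e ≠ G.t e) (hs : SrcMate G e) (ht : TgtMate G e) : False := by
  obtain ⟨e1, he1ne, he1⟩ := hs
  obtain ⟨e2, he2ne, he2⟩ := ht
  rw [mem_outBlk] at he1
  rw [mem_inBlk] at he2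
  obtain ⟨hs1, hnl1, -⟩ := he1
  obtain ⟨ht2, hnl2, -⟩ := he2
  have haw : G.t e1 ≠ G.t e := fun hh => he1ne (hU e1 e hs1 hh hnl1)
  have huv : G.s e2 ≠ G.s e := fun hh => he2ne (hU e2 e hh ht2 hnl2)
  have hav : G.t e1 ≠ G.s e := by rw [← hs1]; exact fun hh => hnl1 hh.symm
  have huw : G.s e2 ≠ G.t e := by rw [← ht2]; exact hnl2
  by_cases hau : G.t e1 = G.s e2
  · exact hMP1.1 ⟨G.t e1, G.s e, G.t e, hav, haw, hl,
      ⟨e1, hs1, rfl⟩, ⟨e2, hau.symm, ht2⟩, ⟨e, rfl, rfl⟩⟩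
  · exact hMP1.2.2.2 ⟨G.t e1, G.s e, G.t e, G.s e2, hav, haw, hau, hl, huv.symm, huw.symm,
      ⟨e1, hs1, rfl⟩, ⟨e, rfl, rfl⟩, ⟨e2, rfl, ht2⟩⟩

lemma mem_blk_self (e : G.E) : e ∈ blk G e := by
  unfold blk
  split_ifs with h1 h2 h3 h4
  · exact Finset.mem_singleton_self e
  · exact List.mem_toFinset.mpr h2.choose_spec.2.2
  · exact (mem_outBlk G).mpr ⟨rfl, h1, h2⟩
  · exact (mem_inBlk G).mpr ⟨rfl, h1, h2⟩
  · exact Finset.mem_singleton_self e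

lemma kfun_outBlk (v : G.V) : kfun G (outBlk G v) = 1 := by
  unfold kfun
  rw [if_neg, if_neg]
  · rintro ⟨x, hx, hxc⟩
    exact ((mem_outBlk G).mp hx).2.2 hxc
  · rintro ⟨x, hx, hxl⟩
    exact ((mem_outBlk G).mp hx).2.1 hxl

lemma kfun_inBlk (v : G.V) : kfun G (inBlk G v) = 1 := by
  unfold kfun
  rw [if_neg, if_neg]
  · rintro ⟨x, hx, hxc⟩
    exact ((mem_inBlk G).mp hx).2.2 hxc
  · rintro ⟨x, hx, hxl⟩
    exact ((mem_inBlk G).mp hx).2.1 hxl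

lemma kfun_cycle (c : List G.E) (hc : G.IsCohCycle c) (h2 : 2 ≤ c.length) :
    kfun G c.toFinset = c.toFinset.card - 1 := by
  have h0 : 0 < c.length := by omega
  have hA : ¬ ∃ x ∈ c.toFinset, G.s x = G.t x := by
    rintro ⟨x, hx, hxl⟩
    obtain ⟨i, hi, rfl⟩ := mem_cg G c h0 (List.mem_toFinset.mp hx)
    exact cycle_nonloop G c hc h0 h2 i hxl
  have hB : ∃ x ∈ c.toFinset, CycE G x :=
    ⟨cg G c h0 0, List.mem_toFinset.mpr (cg_mem G c h0 0), c, hc, h2, cg_mem G c h0 0⟩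
  unfold kfun
  rw [if_neg hA, if_pos hB]

lemma kfun_single_nonloop {e : G.E} (h1 : ¬ G.s e = G.t e) (h2 : ¬ CycE G e) :
    kfun G ({e} : Finset G.E) = 1 := by
  unfold kfun
  rw [if_neg, if_neg]
  · rintro ⟨x, hx, hxc⟩
    rw [Finset.mem_singleton] at hx
    exact h2 (hx ▸ hxc)
  · rintro ⟨x, hx, hxl⟩
    rw [Finset.mem_singleton] at hx
    exact h1 (hx ▸ hxl)

lemma kfun_single_loop {e : G.E} (h1 : G.s e = G.t e) :
    kfun G ({e} : Finset G.E) = 0 := by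
  unfold kfun
  rw [if_pos ⟨e, Finset.mem_singleton_self e, h1⟩]

lemma blk_eq (hU : G.EdgeUnique) (hMP1 : G.MP1) (hMP2 : G.MP2) {e f : G.E}
    (hf : f ∈ blk G e) : blk G f = blk G e := by
  unfold blk at hf
  split_ifs at hf with h1 h2 h3 h4
  · rw [Finset.mem_singleton] at hf; rw [hf]
  · have hcs := h2.choose_spec
    have hfc : f ∈ h2.choose := List.mem_toFinset.mp hf
    have hcf : CycE G f := ⟨h2.choose, hcs.1, hcs.2.1, hfc⟩
    have hfl : ¬ G.s f = G.t f := cycE_nonloop G hcf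
    unfold blk
    rw [if_neg hfl, dif_pos hcf, if_neg h1, dif_pos h2]
    exact cycle_toFinset_eq G hMP2 hcf.choose_spec.1 hcs.1 hcf.choose_spec.2.1 hcs.2.1
      hcf.choose_spec.2.2 hfc
  · rw [mem_outBlk] at hf
    obtain ⟨hfs, hfl, hfc⟩ := hf
    obtain ⟨g, hgne, hgmem⟩ := h3
    have heo : e ∈ outBlk G (G.s e) := (mem_outBlk G).mpr ⟨rfl, h1, h2⟩
    have hsm : SrcMate G f := by
      rcases eq_or_ne e f with h | h
      · exact ⟨g, h ▸ hgne, by rw [hfs]; exact hgmem⟩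
      · exact ⟨e, h, by rw [hfs]; exact heo⟩
    have h3' : SrcMate G e := ⟨g, hgne, hgmem⟩
    unfold blk
    rw [if_neg hfl, dif_neg hfc, if_pos hsm, hfs, if_neg h1, dif_neg h2, if_pos h3']
  · rw [mem_inBlk] at hf
    obtain ⟨hft, hfl, hfc⟩ := hf
    obtain ⟨g, hgne, hgmem⟩ := h4
    have hei : e ∈ inBlk G (G.t e) := (mem_inBlk G).mpr ⟨rfl, h1, h2⟩
    have htm : TgtMate G f := by
      rcases eq_or_ne e f with h | h
      · exact ⟨g, h ▸ hgne, by rw [hft]; exact hgmem⟩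
      · exact ⟨e, h, by rw [hft]; exact hei⟩
    have hnsm : ¬ SrcMate G f := fun hsm => not_both_mates G hU hMP1 f hfl hsm htm
    have h4' : TgtMate G e := ⟨g, hgne, hgmem⟩
    unfold blk
    rw [if_neg hfl, dif_neg hfc, if_neg hnsm, if_pos htm, hft, if_neg h1, dif_neg h2,
      if_neg h3, if_pos h4']
  · rw [Finset.mem_singleton] at hf; rw [hf]

lemma forward (hMP2 : G.MP2) {m : Finset G.E} (hm : G.IsMultipath m) (g : G.E) :
    (m ∩ blk G g).card ≤ kfun G (blk G g) := by
  obtain ⟨hm1, hm2, hm3, hm4⟩ := hm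
  unfold blk
  split_ifs with h1 h2 h3 h4
  · have hgm : g ∉ m := fun h => hm1 g h h1
    have hempty : m ∩ {g} = ∅ := by
      ext x
      simp only [Finset.mem_inter, Finset.mem_singleton, Finset.notMem_empty, iff_false, not_and]
      rintro hx rfl
      exact hgm hx
    rw [hempty]
    simp
  · have hcs := h2.choose_spec
    set c := h2.choose with hcdef
    have hlen : 2 ≤ c.length := hcs.2.1
    have hcard : c.toFinset.card = c.length := List.toFinset_card_of_nodup hcs.1.2.1
    rw [kfun_cycle G c hcs.1 hlen]
    by_contra hcon
    push_neg at hcon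
    have hle : (m ∩ c.toFinset).card ≤ c.toFinset.card :=
      Finset.card_le_card Finset.inter_subset_right
    have hsub : m ∩ c.toFinset = c.toFinset :=
      Finset.eq_of_subset_of_card_le Finset.inter_subset_right (by omega)
    refine hm4 ⟨c, hcs.1, fun x hx => ?_⟩
    have hx2 : x ∈ m ∩ c.toFinset := by rw [hsub]; exact List.mem_toFinset.mpr hx
    exact (Finset.mem_inter.mp hx2).1
  · rw [kfun_outBlk, Finset.card_le_one]
    intro a ha b hb
    rw [Finset.mem_inter] at ha hb
    exact hm2 a ha.1 b hb.1
      (((mem_outBlk G).mp ha.2).1.trans ((mem_outBlk G).mp hb.2).1.symm)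
  · rw [kfun_inBlk, Finset.card_le_one]
    intro a ha b hb
    rw [Finset.mem_inter] at ha hb
    exact hm3 a ha.1 b hb.1
      (((mem_inBlk G).mp ha.2).1.trans ((mem_inBlk G).mp hb.2).1.symm)
  · rw [kfun_single_nonloop G h1 h2]
    calc (m ∩ {g}).card ≤ ({g} : Finset G.E).card :=
          Finset.card_le_card Finset.inter_subset_right
      _ = 1 := Finset.card_singleton g

lemma backward (hU : G.EdgeUnique) (hMP1 : G.MP1) (hMP2 : G.MP2) {m : Finset G.E}
    (hcap : ∀ g : G.E, (m ∩ blk G g).card ≤ kfun G (blk G g)) : G.IsMultipath m := by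
  have hm1 : ∀ e ∈ m, G.s e ≠ G.t e := by
    intro e he hl
    have hc := hcap e
    unfold blk at hc
    rw [if_pos hl, kfun_single_loop G hl, Nat.le_zero, Finset.card_eq_zero] at hc
    have hmem : e ∈ m ∩ {e} := Finset.mem_inter.mpr ⟨he, Finset.mem_singleton_self e⟩
    rw [hc] at hmem
    exact absurd hmem (Finset.notMem_empty e)
  have hm2 : ∀ e ∈ m, ∀ f ∈ m, G.s e = G.s f → e = f := by
    intro e he f hf hsef
    by_contra hne
    have hle := hm1 e he
    have hlf := hm1 f hf
    by_cases hce : CycE G e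
    · obtain ⟨c, hc, h2c, hec⟩ := hce
      have hfc : f ∈ c := hMP2 c hc h2c f ⟨e, hec, Or.inl hsef⟩
      exact hne (src_inj_mem G c hc (by omega) hec hfc hsef)
    by_cases hcf : CycE G f
    · obtain ⟨c, hc, h2c, hfcm⟩ := hcf
      have hec : e ∈ c := hMP2 c hc h2c e ⟨f, hfcm, Or.inl hsef.symm⟩
      exact hne (src_inj_mem G c hc (by omega) hec hfcm hsef)
    have hfe : f ∈ outBlk G (G.s e) := (mem_outBlk G).mpr ⟨hsef.symm, hlf, hcf⟩
    have hee : e ∈ outBlk G (G.s e) := (mem_outBlk G).mpr ⟨rfl, hle, hce⟩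
    have hsm : SrcMate G e := ⟨f, Ne.symm hne, hfe⟩
    have hc := hcap e
    unfold blk at hc
    rw [if_neg hle, dif_neg hce, if_pos hsm, kfun_outBlk] at hc
    have hsubset : ({e, f} : Finset G.E) ⊆ m ∩ outBlk G (G.s e) := by
      intro x hx
      rcases Finset.mem_insert.mp hx with rfl | hx
      · exact Finset.mem_inter.mpr ⟨he, hee⟩
      · rw [Finset.mem_singleton] at hx
        subst hx
        exact Finset.mem_inter.mpr ⟨hf, hfe⟩
    have h2le : 2 ≤ (m ∩ outBlk G (G.s e)).card := by
      calc 2 = ({e, f} : Finset G.E).card := (Finset.card_pair hne).symm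
        _ ≤ _ := Finset.card_le_card hsubset
    omega
  have hm3 : ∀ e ∈ m, ∀ f ∈ m, G.t e = G.t f → e = f := by
    intro e he f hf htef
    by_contra hne
    have hle := hm1 e he
    have hlf := hm1 f hf
    by_cases hce : CycE G e
    · obtain ⟨c, hc, h2c, hec⟩ := hce
      have hfc : f ∈ c := mem_of_tgt G hMP2 c hc h2c hec htef
      exact hne (tgt_inj_mem G c hc (by omega) hec hfc htef)
    by_cases hcf : CycE G f
    · obtain ⟨c, hc, h2c, hfcm⟩ := hcf
      have hec : e ∈ c := mem_of_tgt G hMP2 c hc h2c hfcm htef.symm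
      exact hne (tgt_inj_mem G c hc (by omega) hec hfcm htef)
    have hfe : f ∈ inBlk G (G.t e) := (mem_inBlk G).mpr ⟨htef.symm, hlf, hcf⟩
    have hee : e ∈ inBlk G (G.t e) := (mem_inBlk G).mpr ⟨rfl, hle, hce⟩
    have htm : TgtMate G e := ⟨f, Ne.symm hne, hfe⟩
    have hnsm : ¬ SrcMate G e := fun hsm => not_both_mates G hU hMP1 e hle hsm htm
    have hc := hcap e
    unfold blk at hc
    rw [if_neg hle, dif_neg hce, if_neg hnsm, if_pos htm, kfun_inBlk] at hc
    have hsubset : ({e, f} : Finset G.E) ⊆ m ∩ inBlk G (G.t e) := by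
      intro x hx
      rcases Finset.mem_insert.mp hx with rfl | hx
      · exact Finset.mem_inter.mpr ⟨he, hee⟩
      · rw [Finset.mem_singleton] at hx
        subst hx
        exact Finset.mem_inter.mpr ⟨hf, hfe⟩
    have h2le : 2 ≤ (m ∩ inBlk G (G.t e)).card := by
      calc 2 = ({e, f} : Finset G.E).card := (Finset.card_pair hne).symm
        _ ≤ _ := Finset.card_le_card hsubset
    omega
  refine ⟨hm1, hm2, hm3, ?_⟩
  rintro ⟨c, hc, hcm⟩
  have h0 : 0 < c.length := List.length_pos_iff.mpr hc.1
  rcases Nat.lt_or_ge c.length 2 with hlt | h2c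
  · have hone : c.length = 1 := by omega
    have key := hc.2.2.2 ⟨0, h0⟩
    have hfin : (⟨(0 + 1) % c.length, Nat.mod_lt _ (Nat.lt_of_le_of_lt (Nat.zero_le _) h0)⟩ :
        Fin c.length) = ⟨0, h0⟩ := Fin.ext (show (0 + 1) % c.length = 0 by rw [hone])
    have h00 : G.s (c.get ⟨(0 + 1) % c.length,
        Nat.mod_lt _ (Nat.lt_of_le_of_lt (Nat.zero_le _) h0)⟩) = G.s (c.get ⟨0, h0⟩) :=
      congrArg (fun x => G.s (c.get x)) hfin
    exact hm1 (c.get ⟨0, h0⟩) (hcm _ (List.get_mem c ⟨0, h0⟩)) (key.trans h00).symm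
  · set e := cg G c h0 0 with hedef
    have hce : CycE G e := ⟨c, hc, h2c, cg_mem G c h0 0⟩
    have hle : ¬ G.s e = G.t e := cycle_nonloop G c hc h0 h2c 0
    have hc' := hcap e
    unfold blk at hc'
    rw [if_neg hle, dif_pos hce] at hc'
    have heqset : hce.choose.toFinset = c.toFinset :=
      cycle_toFinset_eq G hMP2 hce.choose_spec.1 hc hce.choose_spec.2.1 h2c
        hce.choose_spec.2.2 (cg_mem G c h0 0)
    rw [heqset, kfun_cycle G c hc h2c] at hc'
    have hsub : c.toFinset ⊆ m := fun x hx => hcm x (List.mem_toFinset.mp hx)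
    rw [Finset.inter_eq_right.mpr hsub] at hc'
    have hcard : c.toFinset.card = c.length := List.toFinset_card_of_nodup hc.2.1
    omega

end MPAux

/-- The multipath matroid of an MP-digraph is isomorphic to
a direct sum of uniform matroids: there is a partition `P` of the edge set and
caps `k B` such that a set is independent iff it meets each block `B` of the
partition in at most `k B` edges (such a matroid is precisely a direct sum
`⊕_{B ∈ P} U_{k B, |B|}` of uniform matroids, up to isomorphism). -/
theorem multipath_matroid_direct_sum_uniform (G : DiGraph) (hU : G.EdgeUnique)
    (hMP : G.IsMPDigraph) :
    ∃ (P : Finset (Finset G.E)) (k : Finset G.E → ℕ),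
      (∀ e : G.E, ∃! B : Finset G.E, B ∈ P ∧ e ∈ B) ∧
      ∀ m : Finset G.E, G.IsMultipath m ↔ ∀ B ∈ P, (m ∩ B).card ≤ k B := by
  obtain ⟨hMP1, hMP2⟩ := hMP
  refine ⟨Finset.univ.image (MPAux.blk G), MPAux.kfun G, ?_, ?_⟩
  · intro e
    refine ⟨MPAux.blk G e, ⟨Finset.mem_image_of_mem _ (Finset.mem_univ e),
      MPAux.mem_blk_self G e⟩, ?_⟩
    rintro B ⟨hBP, heB⟩
    obtain ⟨g, -, rfl⟩ := Finset.mem_image.mp hBP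
    exact (MPAux.blk_eq G hU hMP1 hMP2 heB).symm
  · intro m
    constructor
    · intro hm B hBP
      obtain ⟨g, -, rfl⟩ := Finset.mem_image.mp hBP
      exact MPAux.forward G hMP2 hm g
    · intro hcap
      exact MPAux.backward G hU hMP1 hMP2 fun g =>
        hcap _ (Finset.mem_image_of_mem _ (Finset.mem_univ g))
end
end

section
/- Every multipath matroid (the matroid M_G = (E(G), Mult(G)) of any MP-digraph G) is regular (representable over every field) and graphic. -/
set_option autoImplicit false

noncomputable section

attribute [local instance] Classical.propDecidable

namespace MPAux

open DiGraph Sum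

variable (G : DiGraph)

abbrev V0 := (G.E ⊕ G.E) ⊕ (G.V × Bool × Bool)

def OnCyc (e : G.E) : Prop := ∃ c : List G.E, IsCohCycle G c ∧ 2 ≤ c.length ∧ e ∈ c

def SinkE (e : G.E) : Prop := ∃ f : G.E, f ≠ e ∧ G.s f ≠ G.t f ∧ G.t f = G.t e

def SourceE (e : G.E) : Prop := ∃ f : G.E, f ≠ e ∧ G.s f ≠ G.t f ∧ G.s f = G.s e

def nxt (e : G.E) : G.E := if h : ∃ f, G.s f = G.t e then h.choose else e

lemma nxt_s {e : G.E} (h : ∃ f, G.s f = G.t e) : G.s (nxt G e) = G.t e := by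
  rw [nxt, dif_pos h]; exact h.choose_spec

def ends0 (e : G.E) : V0 G × V0 G :=
  if G.s e = G.t e then (inl (inl e), inl (inl e))
  else if OnCyc G e then (inl (inl e), inl (inl (nxt G e)))
  else if SinkE G e then (inr (G.t e, false, false), inr (G.t e, false, true))
  else if SourceE G e then (inr (G.s e, true, false), inr (G.s e, true, true))
  else (inl (inl e), inl (inr e))

lemma ends0_loop {e : G.E} (h : G.s e = G.t e) :
    ends0 G e = (inl (inl e), inl (inl e)) := by simp [ends0, h]

lemma ends0_cyc {e : G.E} (h : ¬ G.s e = G.t e) (hc : OnCyc G e) :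
    ends0 G e = (inl (inl e), inl (inl (nxt G e))) := by simp [ends0, h, hc]

lemma ends0_sink {e : G.E} (h : ¬ G.s e = G.t e) (hc : ¬ OnCyc G e) (hs : SinkE G e) :
    ends0 G e = (inr (G.t e, false, false), inr (G.t e, false, true)) := by
  simp [ends0, h, hc, hs]

lemma ends0_source {e : G.E} (h : ¬ G.s e = G.t e) (hc : ¬ OnCyc G e) (hs : ¬ SinkE G e)
    (hr : SourceE G e) :
    ends0 G e = (inr (G.s e, true, false), inr (G.s e, true, true)) := by
  simp [ends0, h, hc, hs, hr]

lemma ends0_plain {e : G.E} (h : ¬ G.s e = G.t e) (hc : ¬ OnCyc G e) (hs : ¬ SinkE G e)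
    (hr : ¬ SourceE G e) :
    ends0 G e = (inl (inl e), inl (inr e)) := by
  simp [ends0, h, hc, hs, hr]

/-! ### arithmetic helpers -/

lemma mod_succ_inj {n i j : ℕ} (hi : i < n) (hj : j < n) (h : (i+1) % n = (j+1) % n) :
    i = j := by
  rcases Nat.lt_or_ge (i+1) n with h1 | h1 <;> rcases Nat.lt_or_ge (j+1) n with h2 | h2
  · rw [Nat.mod_eq_of_lt h1, Nat.mod_eq_of_lt h2] at h; omega
  · have hj1 : j + 1 = n := by omega
    rw [Nat.mod_eq_of_lt h1, hj1, Nat.mod_self] at h; omega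
  · have hi1 : i + 1 = n := by omega
    rw [Nat.mod_eq_of_lt h2, hi1, Nat.mod_self] at h; omega
  · omega

lemma mod_succ_ne {n i : ℕ} (hi : i < n) (hn : 2 ≤ n) (h : (i+1) % n = i) : False := by
  rcases Nat.lt_or_ge (i+1) n with h1 | h1
  · rw [Nat.mod_eq_of_lt h1] at h; omega
  · have hi1 : i + 1 = n := by omega
    rw [hi1, Nat.mod_self] at h; omega

/-! ### coherently oriented cycle lemmas -/

variable {G}

lemma fin_get_mem {α : Type*} (l : List α) (i : Fin l.length) : l.get i ∈ l :=
  List.get_mem l i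


lemma cyc_get_inj {c : List G.E} (hc : IsCohCycle G c) {i j : Fin c.length}
    (h : c.get i = c.get j) : i = j := (List.Nodup.get_inj_iff hc.2.1).mp h

lemma cyc_s_inj {c : List G.E} (hc : IsCohCycle G c) {a b : G.E} (ha : a ∈ c) (hb : b ∈ c)
    (h : G.s a = G.s b) : a = b :=
  List.inj_on_of_nodup_map hc.2.2.1 ha hb h

lemma cyc_t_inj {c : List G.E} (hc : IsCohCycle G c) {a b : G.E} (ha : a ∈ c) (hb : b ∈ c)
    (h : G.t a = G.t b) : a = b := by
  obtain ⟨i, rfl⟩ := List.mem_iff_get.mp ha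
  obtain ⟨j, rfl⟩ := List.mem_iff_get.mp hb
  have h1 := hc.2.2.2 i
  have h2 := hc.2.2.2 j
  have h3 := cyc_s_inj hc (fin_get_mem _ _) (fin_get_mem _ _) ((h1.symm.trans h).trans h2)
  have h4 := congrArg Fin.val (cyc_get_inj hc h3)
  exact congrArg c.get (Fin.ext (mod_succ_inj i.isLt j.isLt h4))

lemma cyc_nonloop {c : List G.E} (hc : IsCohCycle G c) (hlen : 2 ≤ c.length) {e : G.E}
    (he : e ∈ c) : G.s e ≠ G.t e := by
  obtain ⟨i, rfl⟩ := List.mem_iff_get.mp he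
  intro h
  have h1 := hc.2.2.2 i
  rw [← h] at h1
  have h2 := congrArg Fin.val
    (cyc_get_inj hc (cyc_s_inj hc (fin_get_mem _ _) (fin_get_mem _ _) h1))
  exact mod_succ_ne i.isLt hlen h2.symm

lemma cyc_len_one {c : List G.E} (hc : IsCohCycle G c) (h1 : c.length = 1) :
    ∃ e, c = [e] ∧ G.s e = G.t e := by
  obtain ⟨e, rfl⟩ := List.length_eq_one_iff.mp h1
  refine ⟨e, rfl, ?_⟩
  have := hc.2.2.2 ⟨0, by simp⟩
  simpa using this.symm

lemma mem_cycle_of_touch (h2 : MP2 G) {c : List G.E} (hc : IsCohCycle G c)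
    (hlen : 2 ≤ c.length) {f g : G.E} (hg : g ∈ c)
    (h : G.s g = G.s f ∨ G.s g = G.t f) : f ∈ c :=
  h2 c hc hlen f ⟨g, hg, h⟩

lemma cyc_pos_len {c : List G.E} (hc : IsCohCycle G c) : 0 < c.length :=
  List.length_pos_iff.mpr hc.1

lemma nxt_get (h2 : MP2 G) {c : List G.E} (hc : IsCohCycle G c) (hlen : 2 ≤ c.length)
    (i : Fin c.length) :
    nxt G (c.get i) = c.get ⟨(i.val+1) % c.length, Nat.mod_lt _ i.pos⟩ := by
  have hex : ∃ f, G.s f = G.t (c.get i) := ⟨_, (hc.2.2.2 i).symm⟩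
  have hs := nxt_s G hex
  have hmem : nxt G (c.get i) ∈ c :=
    mem_cycle_of_touch h2 hc hlen (fin_get_mem _ _) (Or.inl (by rw [hs, hc.2.2.2 i]))
  exact cyc_s_inj hc hmem (fin_get_mem _ _) (by rw [hs, hc.2.2.2 i])

lemma nxt_mem (h2 : MP2 G) {c : List G.E} (hc : IsCohCycle G c) (hlen : 2 ≤ c.length)
    {e : G.E} (he : e ∈ c) : nxt G e ∈ c := by
  obtain ⟨i, rfl⟩ := List.mem_iff_get.mp he
  rw [nxt_get h2 hc hlen i]
  exact fin_get_mem _ _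

lemma nxt_ne (h2 : MP2 G) {c : List G.E} (hc : IsCohCycle G c) (hlen : 2 ≤ c.length)
    {e : G.E} (he : e ∈ c) : nxt G e ≠ e := by
  intro h
  have hex : ∃ f, G.s f = G.t e := by
    obtain ⟨i, hi⟩ := List.mem_iff_get.mp he
    exact ⟨_, by rw [← hi]; exact (hc.2.2.2 i).symm⟩
  have := nxt_s G hex
  rw [h] at this
  exact cyc_nonloop hc hlen he this

lemma oncyc_src_eq (h2 : MP2 G) {e f : G.E} (he : OnCyc G e) (hsf : G.s f = G.s e) :
    f = e := by
  obtain ⟨c, hc, hlen, hec⟩ := he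
  exact cyc_s_inj hc (mem_cycle_of_touch h2 hc hlen hec (Or.inl hsf.symm)) hec hsf

lemma oncyc_tgt_eq (h2 : MP2 G) {e f : G.E} (he : OnCyc G e) (htf : G.t f = G.t e) :
    f = e := by
  obtain ⟨c, hc, hlen, hec⟩ := he
  obtain ⟨i, rfl⟩ := List.mem_iff_get.mp hec
  have hf : f ∈ c := mem_cycle_of_touch h2 hc hlen (fin_get_mem c _)
    (Or.inr (by rw [htf]; exact (hc.2.2.2 i).symm))
  exact cyc_t_inj hc hf (fin_get_mem _ _) htf

lemma nxt_injOn (h2 : MP2 G) {c : List G.E} (hc : IsCohCycle G c) (hlen : 2 ≤ c.length)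
    {a b : G.E} (ha : a ∈ c) (hb : b ∈ c) (h : nxt G a = nxt G b) : a = b := by
  obtain ⟨i, rfl⟩ := List.mem_iff_get.mp ha
  obtain ⟨j, rfl⟩ := List.mem_iff_get.mp hb
  rw [nxt_get h2 hc hlen i, nxt_get h2 hc hlen j] at h
  have h4 := congrArg Fin.val (cyc_get_inj hc h)
  exact congrArg c.get (Fin.ext (mod_succ_inj i.isLt j.isLt h4))

lemma ends0_ne {e : G.E} (h : ¬ G.s e = G.t e) :
    (ends0 G e).1 ≠ (ends0 G e).2 := by
  by_cases hcy : OnCyc G e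
  · rw [ends0_cyc G h hcy]
    intro heq
    have he : e = nxt G e := by simpa using heq
    obtain ⟨c, hcc, hlen, hec⟩ := hcy
    have hex : ∃ f, G.s f = G.t e := by
      obtain ⟨i, hi⟩ := List.mem_iff_get.mp hec
      exact ⟨_, by rw [← hi]; exact (hcc.2.2.2 i).symm⟩
    exact h ((congrArg G.s he).trans (nxt_s G hex))
  · by_cases hsk : SinkE G e
    · rw [ends0_sink G h hcy hsk]; simp
    · by_cases hsr : SourceE G e
      · rw [ends0_source G h hcy hsk hsr]; simp
      · rw [ends0_plain G h hcy hsk hsr]; simp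

end MPAux

namespace MPAux

open DiGraph Sum

variable {G : DiGraph}

/-- Key consequence of (MP1): a non-loop edge cannot simultaneously have a
co-source partner and a co-target partner. -/
lemma no_sink_source (hU : EdgeUnique G) (h1 : MP1 G) {e f g : G.E}
    (hel : G.s e ≠ G.t e) (hfe : f ≠ e) (hfl : G.s f ≠ G.t f) (hsf : G.s f = G.s e)
    (hge : g ≠ e) (hgl : G.s g ≠ G.t g) (htg : G.t g = G.t e) : False := by
  have hab : G.s e ≠ G.t e := hel
  have hca : G.t f ≠ G.s e := by
    intro h; exact hfl (by rw [hsf, h])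
  have hcb : G.t f ≠ G.t e := by
    intro h; exact hfe (hU f e hsf h hfl)
  have hdb : G.s g ≠ G.t e := by
    intro h; exact hgl (by rw [h, htg])
  have hda : G.s g ≠ G.s e := by
    intro h; exact hge (hU g e h htg (by rw [h, htg]; exact hab))
  by_cases hdc : G.s g = G.t f
  · -- pattern A with (v0, v1, v2) = (t f, s e, t e)
    exact h1.1 ⟨G.t f, G.s e, G.t e, hca, hcb, hab,
      ⟨f, hsf, rfl⟩, ⟨g, hdc, htg⟩, ⟨e, rfl, rfl⟩⟩
  · -- pattern B with (v0, v1, v2, v3) = (s g, t e, s e, t f)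
    exact h1.2.2.1 ⟨G.s g, G.t e, G.s e, G.t f, hdb, hda, hdc, hab.symm, hcb.symm, hca.symm,
      ⟨g, rfl, htg⟩, ⟨e, rfl, rfl⟩, ⟨f, hsf, rfl⟩⟩

lemma multipath_mono {m m' : Finset G.E} (h : m' ⊆ m) (hm : IsMultipath G m) :
    IsMultipath G m' := by
  obtain ⟨h1, h2, h3, h4⟩ := hm
  refine ⟨fun e he => h1 e (h he), fun e he f hf => h2 e (h he) f (h hf),
    fun e he f hf => h3 e (h he) f (h hf), fun ⟨c, hc, hsub⟩ => h4 ⟨c, hc, fun g hg => h (hsub g hg)⟩⟩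

/-- Every nonempty multipath has a "leaf": an edge `e` and an endpoint `v` of
`e` that is an endpoint of no other edge of the multipath. -/
lemma exists_leaf (hU : EdgeUnique G) (hMP : IsMPDigraph G) (m : Finset G.E)
    (hm : IsMultipath G m) (hne : m.Nonempty) :
    ∃ e ∈ m, ∃ v : V0 G, (v = (ends0 G e).1 ∨ v = (ends0 G e).2) ∧
      (ends0 G e).1 ≠ (ends0 G e).2 ∧
      ∀ f ∈ m, f ≠ e → (ends0 G f).1 ≠ v ∧ (ends0 G f).2 ≠ v := by
  obtain ⟨e₀, he₀⟩ := hne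
  have hl₀ : ¬ G.s e₀ = G.t e₀ := hm.1 e₀ he₀
  by_cases hcy : OnCyc G e₀
  · -- cycle case
    obtain ⟨c, hc, hlen, hec⟩ := hcy
    set n := c.length with hn
    -- not all of c is contained in m
    have hnotall : ∃ i : Fin n, c.get i ∉ m := by
      by_contra hall
      push_neg at hall
      exact hm.2.2.2 ⟨c, hc, fun g hg => by
        obtain ⟨i, hi⟩ := List.mem_iff_get.mp hg
        exact hi ▸ hall i⟩
    obtain ⟨i, hi⟩ := hnotall
    obtain ⟨j, hj⟩ := List.mem_iff_get.mp hec
    have hij : i ≠ j := fun h => hi (h ▸ hj ▸ he₀)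
    have hnpos : 0 < n := i.pos
    -- find the first index after i that lies in m
    have hkex : ∃ k, 1 ≤ k ∧ c.get ⟨(i.val + k) % n, Nat.mod_lt _ hnpos⟩ ∈ m := by
      refine ⟨j.val + (n - i.val), by omega, ?_⟩
      have harith : (i.val + (j.val + (n - i.val))) % n = j.val := by
        have h1 : i.val + (j.val + (n - i.val)) = j.val + n := by
          have := i.isLt; omega
        rw [h1, Nat.add_mod_right, Nat.mod_eq_of_lt j.isLt]
      have : (⟨(i.val + (j.val + (n - i.val))) % n, Nat.mod_lt _ hnpos⟩ : Fin n)
          = j := Fin.ext harith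
      rw [this, hj]; exact he₀
    set k₀ := Nat.find hkex with hk₀
    obtain ⟨hk₀1, hk₀mem⟩ := Nat.find_spec hkex
    set g₀ : G.E := c.get ⟨(i.val + k₀) % n, Nat.mod_lt _ hnpos⟩ with hg₀
    have hg₀c : g₀ ∈ c := fin_get_mem _ _
    have hpred : c.get ⟨(i.val + (k₀ - 1)) % n, Nat.mod_lt _ hnpos⟩ ∉ m := by
      by_cases hk1 : k₀ = 1
      · have : (⟨(i.val + (k₀ - 1)) % n, Nat.mod_lt _ hnpos⟩ : Fin n) = i := by
          apply Fin.ext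
          simp [hk1, Nat.mod_eq_of_lt i.isLt]
        rw [this]; exact hi
      · intro hmem
        exact Nat.find_min hkex (by omega : k₀ - 1 < k₀) ⟨by omega, hmem⟩
    -- key succ relation: t (c.get pred) = s g₀
    have hsucc : G.t (c.get ⟨(i.val + (k₀ - 1)) % n, Nat.mod_lt _ hnpos⟩) = G.s g₀ := by
      have h1 := hc.2.2.2 ⟨(i.val + (k₀ - 1)) % n, Nat.mod_lt _ hnpos⟩
      have h2 : ((i.val + (k₀ - 1)) % n + 1) % n = (i.val + k₀) % n := by
        rw [Nat.mod_add_mod]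
        congr 1
        omega
      rw [h1, hg₀]
      exact congrArg (fun x : Fin n => G.s (c.get x)) (Fin.ext h2)
    have hg₀cyc : OnCyc G g₀ := ⟨c, hc, hlen, hg₀c⟩
    have hg₀l : ¬ G.s g₀ = G.t g₀ := cyc_nonloop hc hlen hg₀c
    refine ⟨g₀, hk₀mem, inl (inl g₀), ?_, ends0_ne hg₀l, ?_⟩
    · left; rw [ends0_cyc G hg₀l hg₀cyc]
    · intro f hf hfg
      have hfl : ¬ G.s f = G.t f := hm.1 f hf
      constructor
      · -- first component of ends0 f equals inl (inl g₀)?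
        by_cases hfc : OnCyc G f
        · rw [ends0_cyc G hfl hfc]
          intro hh
          exact hfg (by simpa using hh)
        · by_cases hfs : SinkE G f
          · rw [ends0_sink G hfl hfc hfs]; simp
          · by_cases hfr : SourceE G f
            · rw [ends0_source G hfl hfc hfs hfr]; simp
            · rw [ends0_plain G hfl hfc hfs hfr]
              intro hh
              exact hfg (by simpa using hh)
      · by_cases hfc : OnCyc G f
        · rw [ends0_cyc G hfl hfc]
          intro hh
          have hnf : nxt G f = g₀ := by simpa using hh
          -- then f is the predecessor of g₀ in c, which is not in m
          have hexf : ∃ h', G.s h' = G.t f := by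
            obtain ⟨c', hc', hlen', hfc'⟩ := hfc
            obtain ⟨q, hq⟩ := List.mem_iff_get.mp hfc'
            exact ⟨_, by rw [← hq]; exact (hc'.2.2.2 q).symm⟩
          have hsg : G.s g₀ = G.t f := by rw [← hnf]; exact nxt_s G hexf
          have hfmem : f ∈ c := mem_cycle_of_touch hMP.2 hc hlen hg₀c (Or.inr hsg)
          have : f = c.get ⟨(i.val + (k₀ - 1)) % n, Nat.mod_lt _ hnpos⟩ :=
            cyc_t_inj hc hfmem (fin_get_mem _ _) (by rw [← hsg]; exact hsucc.symm)
          exact hpred (this ▸ hf)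
        · by_cases hfs : SinkE G f
          · rw [ends0_sink G hfl hfc hfs]; simp
          · by_cases hfr : SourceE G f
            · rw [ends0_source G hfl hfc hfs hfr]; simp
            · rw [ends0_plain G hfl hfc hfs hfr]; simp
  · -- not on a cycle
    by_cases hsk : SinkE G e₀
    · refine ⟨e₀, he₀, inr (G.t e₀, false, true), ?_, ends0_ne hl₀, ?_⟩
      · right; rw [ends0_sink G hl₀ hcy hsk]
      · intro f hf hfe
        have hfl : ¬ G.s f = G.t f := hm.1 f hf
        by_cases hfc : OnCyc G f
        · rw [ends0_cyc G hfl hfc]; simp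
        · by_cases hfs : SinkE G f
          · rw [ends0_sink G hfl hfc hfs]
            constructor
            · simp
            · intro hh
              have : G.t f = G.t e₀ := by simpa using hh
              exact hfe (hm.2.2.1 f hf e₀ he₀ this)
          · by_cases hfr : SourceE G f
            · rw [ends0_source G hfl hfc hfs hfr]; simp
            · rw [ends0_plain G hfl hfc hfs hfr]; simp
    · by_cases hsr : SourceE G e₀
      · refine ⟨e₀, he₀, inr (G.s e₀, true, true), ?_, ends0_ne hl₀, ?_⟩
        · right; rw [ends0_source G hl₀ hcy hsk hsr]
        · intro f hf hfe
          have hfl : ¬ G.s f = G.t f := hm.1 f hf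
          by_cases hfc : OnCyc G f
          · rw [ends0_cyc G hfl hfc]; simp
          · by_cases hfs : SinkE G f
            · rw [ends0_sink G hfl hfc hfs]; simp
            · by_cases hfr : SourceE G f
              · rw [ends0_source G hfl hfc hfs hfr]
                constructor
                · simp
                · intro hh
                  have : G.s f = G.s e₀ := by simpa using hh
                  exact hfe (hm.2.1 f hf e₀ he₀ this)
              · rw [ends0_plain G hfl hfc hfs hfr]; simp
      · refine ⟨e₀, he₀, inl (inr e₀), ?_, ends0_ne hl₀, ?_⟩
        · right; rw [ends0_plain G hl₀ hcy hsk hsr]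
        · intro f hf hfe
          have hfl : ¬ G.s f = G.t f := hm.1 f hf
          by_cases hfc : OnCyc G f
          · rw [ends0_cyc G hfl hfc]; simp
          · by_cases hfs : SinkE G f
            · rw [ends0_sink G hfl hfc hfs]; simp
            · by_cases hfr : SourceE G f
              · rw [ends0_source G hfl hfc hfs hfr]; simp
              · rw [ends0_plain G hfl hfc hfs hfr]
                constructor
                · simp
                · intro hh
                  exact hfe (by simpa using hh)

end MPAux

namespace MPAux

open DiGraph Sum

variable {G : DiGraph}

lemma ends0_eq_of_src (hU : EdgeUnique G) (hMP : IsMPDigraph G) {e f : G.E} (hef : e ≠ f)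
    (he : ¬ G.s e = G.t e) (hf : ¬ G.s f = G.t f) (hs : G.s e = G.s f) :
    ends0 G e = ends0 G f := by
  have hcye : ¬ OnCyc G e := fun hc => hef (oncyc_src_eq hMP.2 hc hs.symm).symm
  have hcyf : ¬ OnCyc G f := fun hc => hef (oncyc_src_eq hMP.2 hc hs)
  have hske : ¬ SinkE G e := fun ⟨g, hg1, hg2, hg3⟩ =>
    no_sink_source hU hMP.1 he hef.symm hf hs.symm hg1 hg2 hg3
  have hskf : ¬ SinkE G f := fun ⟨g, hg1, hg2, hg3⟩ =>
    no_sink_source hU hMP.1 hf hef he hs hg1 hg2 hg3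
  rw [ends0_source G he hcye hske ⟨f, hef.symm, hf, hs.symm⟩,
    ends0_source G hf hcyf hskf ⟨e, hef, he, hs⟩, hs]

lemma ends0_eq_of_tgt (hMP : IsMPDigraph G) {e f : G.E} (hef : e ≠ f)
    (he : ¬ G.s e = G.t e) (hf : ¬ G.s f = G.t f) (ht : G.t e = G.t f) :
    ends0 G e = ends0 G f := by
  have hcye : ¬ OnCyc G e := fun hc => hef (oncyc_tgt_eq hMP.2 hc ht.symm).symm
  have hcyf : ¬ OnCyc G f := fun hc => hef (oncyc_tgt_eq hMP.2 hc ht)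
  rw [ends0_sink G he hcye ⟨f, hef.symm, hf, ht.symm⟩,
    ends0_sink G hf hcyf ⟨e, hef, he, ht⟩, ht]

lemma notMP_cases (hU : EdgeUnique G) (hMP : IsMPDigraph G) {m : Finset G.E}
    (hm : ¬ IsMultipath G m) :
    (∃ e ∈ m, G.s e = G.t e) ∨
    (∃ e ∈ m, ∃ f ∈ m, e ≠ f ∧ ¬ G.s e = G.t e ∧ ends0 G e = ends0 G f) ∨
    (∃ c : List G.E, IsCohCycle G c ∧ 2 ≤ c.length ∧ ∀ g ∈ c, g ∈ m) := by
  by_cases hA : ∀ e ∈ m, G.s e ≠ G.t e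
  · by_cases hB : ∀ e ∈ m, ∀ f ∈ m, G.s e = G.s f → e = f
    · by_cases hC : ∀ e ∈ m, ∀ f ∈ m, G.t e = G.t f → e = f
      · have hD : ¬¬ ∃ c : List G.E, IsCohCycle G c ∧ ∀ g ∈ c, g ∈ m :=
          fun hh => hm ⟨hA, hB, hC, hh⟩
        obtain ⟨c, hc, hsub⟩ := not_not.mp hD
        have hpos : 0 < c.length := cyc_pos_len hc
        rcases Nat.lt_or_ge c.length 2 with hlen | hlen
        · have h1 : c.length = 1 := by omega
          obtain ⟨e, hce, hloop⟩ := cyc_len_one hc h1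
          exact Or.inl ⟨e, hsub e (hce ▸ List.mem_singleton_self e), hloop⟩
        · exact Or.inr (Or.inr ⟨c, hc, hlen, hsub⟩)
      · push_neg at hC
        obtain ⟨e, he, f, hf, ht, hef⟩ := hC
        by_cases hle : G.s e = G.t e
        · exact Or.inl ⟨e, he, hle⟩
        · by_cases hlf : G.s f = G.t f
          · exact Or.inl ⟨f, hf, hlf⟩
          · exact Or.inr (Or.inl ⟨e, he, f, hf, hef, hle, ends0_eq_of_tgt hMP hef hle hlf ht⟩)
    · push_neg at hB
      obtain ⟨e, he, f, hf, hs, hef⟩ := hB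
      by_cases hle : G.s e = G.t e
      · exact Or.inl ⟨e, he, hle⟩
      · by_cases hlf : G.s f = G.t f
        · exact Or.inl ⟨f, hf, hlf⟩
        · exact Or.inr (Or.inl ⟨e, he, f, hf, hef, hle, ends0_eq_of_src hU hMP hef hle hlf hs⟩)
  · push_neg at hA
    obtain ⟨e, he, hle⟩ := hA
    exact Or.inl ⟨e, he, hle⟩

/-- From a failure of the multipath property, produce an undirected cycle in
the associated multigraph. -/
lemma cycle_of_notMP (hU : EdgeUnique G) (hMP : IsMPDigraph G) {m : Finset G.E}
    (hm : ¬ IsMultipath G m) :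
    ∃ (n : ℕ) (ed : Fin n → G.E) (vx : Fin n → V0 G),
      0 < n ∧ Function.Injective ed ∧ Function.Injective vx ∧
      (∀ i : Fin n, ed i ∈ m) ∧
      ∀ i : Fin n, s((ends0 G (ed i)).1, (ends0 G (ed i)).2)
        = s(vx i, vx ⟨(i.val + 1) % n, Nat.mod_lt _ i.pos⟩) := by
  rcases notMP_cases hU hMP hm with ⟨e, he, hloop⟩ | ⟨e, he, f, hf, hef, hle, hends⟩ |
    ⟨c, hc, hlen, hsub⟩
  · refine ⟨1, fun _ => e, fun _ => inl (inl e), Nat.one_pos,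
      fun a b _ => Subsingleton.elim a b, fun a b _ => Subsingleton.elim a b,
      fun _ => he, fun i => ?_⟩
    rw [ends0_loop G hloop]
  · refine ⟨2, ![e, f], ![(ends0 G e).1, (ends0 G e).2], Nat.zero_lt_two, ?_, ?_, ?_, ?_⟩
    · intro a b hab
      fin_cases a <;> fin_cases b
      · rfl
      · exact absurd (by simpa using hab) hef
      · exact absurd (by simpa using hab) (Ne.symm hef)
      · rfl
    · have hne := ends0_ne hle
      intro a b hab
      fin_cases a <;> fin_cases b
      · rfl
      · exact absurd (by simpa using hab) hne
      · exact absurd (by simpa using hab) (Ne.symm hne)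
      · rfl
    · intro i
      fin_cases i
      · simpa using he
      · simpa using hf
    · intro i
      fin_cases i
      · rfl
      · show s((ends0 G f).1, (ends0 G f).2) = s((ends0 G e).2, (ends0 G e).1)
        rw [← hends]
        exact Sym2.eq_swap
  · refine ⟨c.length, fun i => c.get i, fun i => inl (inl (c.get i)),
      cyc_pos_len hc, ?_, ?_, fun i => hsub _ (fin_get_mem _ _), fun i => ?_⟩
    · intro a b hab; exact cyc_get_inj hc hab
    · intro a b hab
      exact cyc_get_inj hc (by simpa using hab)
    · have hl : ¬ G.s (c.get i) = G.t (c.get i) :=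
        cyc_nonloop hc hlen (fin_get_mem _ _)
      rw [ends0_cyc G hl ⟨c, hc, hlen, fin_get_mem _ _⟩, nxt_get hMP.2 hc hlen i]

/-- A multipath spans no cycle in the associated multigraph. -/
lemma no_cycle (hU : EdgeUnique G) (hMP : IsMPDigraph G) :
    ∀ m : Finset G.E, IsMultipath G m →
      ¬ ∃ (n : ℕ) (ed : Fin n → G.E) (vx : Fin n → V0 G),
        0 < n ∧ Function.Injective ed ∧ Function.Injective vx ∧
        (∀ i : Fin n, ed i ∈ m) ∧
        ∀ i : Fin n, s((ends0 G (ed i)).1, (ends0 G (ed i)).2)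
          = s(vx i, vx ⟨(i.val + 1) % n, Nat.mod_lt _ i.pos⟩) := by
  intro m
  induction m using Finset.strongInduction with
  | _ m ih =>
    rintro hm ⟨n, ed, vx, hn, hedi, hvxi, hmem, hends⟩
    rcases Nat.lt_or_ge n 2 with hn2 | hn2
    · -- n = 1 : a loop
      have hn1 : n = 1 := by omega
      have i0 : Fin n := ⟨0, hn⟩
      have h0 := hends ⟨0, hn⟩
      have hidx : (⟨(0 + 1) % n, Nat.mod_lt _ hn⟩ : Fin n) = ⟨0, hn⟩ :=
        Fin.ext (by omega)
      rw [hidx] at h0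
      rw [Sym2.eq_iff] at h0
      have hcomp : (ends0 G (ed ⟨0, hn⟩)).1 = (ends0 G (ed ⟨0, hn⟩)).2 := by
        rcases h0 with ⟨ha, hb⟩ | ⟨ha, hb⟩ <;> rw [ha, hb]
      by_cases hl : G.s (ed ⟨0, hn⟩) = G.t (ed ⟨0, hn⟩)
      · exact hm.1 _ (hmem _) hl
      · exact ends0_ne hl hcomp
    · -- n ≥ 2
      obtain ⟨e', he', v, hv, hvne, hleaf⟩ :=
        exists_leaf hU hMP m hm ⟨ed ⟨0, hn⟩, hmem _⟩
      by_cases hrange : ∃ i, ed i = e'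
      · obtain ⟨i, hei⟩ := hrange
        have hends_i := hends i
        rw [hei] at hends_i
        rw [Sym2.eq_iff] at hends_i
        have hvv : v = vx i ∨ v = vx ⟨(i.val + 1) % n, Nat.mod_lt _ i.pos⟩ := by
          rcases hends_i with ⟨ha, hb⟩ | ⟨ha, hb⟩ <;> rcases hv with hv | hv
          · exact Or.inl (hv.trans ha)
          · exact Or.inr (hv.trans hb)
          · exact Or.inr (hv.trans ha)
          · exact Or.inl (hv.trans hb)
        rcases hvv with hvv | hvv
        · -- the previous edge also touches v = vx i
          set j : Fin n := ⟨(i.val + (n - 1)) % n, Nat.mod_lt _ hn⟩ with hjdef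
          have hjsucc : ((j.val + 1) % n) = i.val := by
            have h1 : (j.val + 1) % n = (i.val + (n - 1) + 1) % n := by
              rw [hjdef]; exact Nat.mod_add_mod _ _ _
            rw [h1]
            have h2 : i.val + (n - 1) + 1 = i.val + n := by omega
            rw [h2, Nat.add_mod_right, Nat.mod_eq_of_lt i.isLt]
          have hji : j ≠ i := by
            intro h
            have := congrArg Fin.val h
            rw [← this] at hjsucc
            exact mod_succ_ne j.isLt hn2 hjsucc
          have hedj : ed j ≠ e' := by
            intro h
            exact hji (hedi (h.trans hei.symm))
          have hends_j := hends j
          have hvxj : vx ⟨(j.val + 1) % n, Nat.mod_lt _ j.pos⟩ = vx i := by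
            exact congrArg vx (Fin.ext hjsucc)
          rw [hvxj] at hends_j
          rw [Sym2.eq_iff] at hends_j
          have := hleaf (ed j) (hmem j) hedj
          rcases hends_j with ⟨ha, hb⟩ | ⟨ha, hb⟩
          · exact this.2 (hb.trans (hvv.symm))
          · exact this.1 (ha.trans (hvv.symm))
        · set j : Fin n := ⟨(i.val + 1) % n, Nat.mod_lt _ i.pos⟩ with hjdef
          have hji : j ≠ i := fun h => mod_succ_ne i.isLt hn2 (congrArg Fin.val h)
          have hedj : ed j ≠ e' := fun h => hji (hedi (h.trans hei.symm))
          have hends_j := hends j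
          rw [Sym2.eq_iff] at hends_j
          have := hleaf (ed j) (hmem j) hedj
          rcases hends_j with ⟨ha, hb⟩ | ⟨ha, hb⟩
          · exact this.1 (ha.trans (hvv.symm))
          · exact this.2 (hb.trans (hvv.symm))
      · -- cycle avoids e' : restrict to m.erase e'
        push_neg at hrange
        exact ih (m.erase e') (Finset.erase_ssubset he')
          (multipath_mono (Finset.erase_subset _ _) hm)
          ⟨n, ed, vx, hn, hedi, hvxi,
            fun i => Finset.mem_erase.mpr ⟨hrange i, hmem i⟩, hends⟩

end MPAux

namespace MPAux

open DiGraph Sum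

variable {G : DiGraph}

/-- The column of the edge `e` in the (signed) incidence matrix. -/
def col (G : DiGraph) (F : Type) [Field F] (e : G.E) : V0 G → F := fun v =>
  (if (ends0 G e).1 = v then 1 else 0) - (if (ends0 G e).2 = v then 1 else 0)

lemma sum_col_eq_zero (hU : EdgeUnique G) (hMP : IsMPDigraph G) (F : Type) [Field F] :
    ∀ m : Finset G.E, IsMultipath G m → ∀ g : G.E → F,
      ∑ e ∈ m, g e • col G F e = 0 → ∀ e ∈ m, g e = 0 := by
  intro m
  induction m using Finset.strongInduction with
  | _ m ih =>
    intro hm g hsum e he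
    obtain ⟨e', he', v, hv, hvne, hleaf⟩ := exists_leaf hU hMP m hm ⟨e, he⟩
    have hterm : ∑ f ∈ m, g f * col G F f v = 0 := by
      have h0 := congrFun hsum v
      rw [Finset.sum_apply] at h0
      simpa [smul_eq_mul] using h0
    have hge' : g e' = 0 := by
      rw [Finset.sum_eq_single e'] at hterm
      · rcases hv with hv | hv
        · have h1 : col G F e' v = 1 := by
            rw [col, if_pos hv.symm, if_neg (fun h => hvne ((h.trans hv).symm))]
            ring
          rw [h1, mul_one] at hterm; exact hterm
        · have h1 : col G F e' v = -1 := by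
            rw [col, if_pos hv.symm, if_neg (fun h => hvne (h.trans hv))]
            ring
          rw [h1] at hterm
          simpa using hterm
      · intro f hf hfe
        have hz := hleaf f hf hfe
        rw [col, if_neg hz.1, if_neg hz.2]
        ring
      · intro h; exact absurd he' h
    have hsum' : ∑ f ∈ m.erase e', g f • col G F f = 0 := by
      have h2 := Finset.add_sum_erase m (fun f => g f • col G F f) he'
      simp only [hge', zero_smul, zero_add] at h2
      rw [h2]
      exact hsum
    by_cases hee : e = e'
    · rw [hee]; exact hge'
    · exact ih (m.erase e') (Finset.erase_ssubset he')
        (multipath_mono (Finset.erase_subset _ _) hm) g hsum' e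
        (Finset.mem_erase.mpr ⟨hee, he⟩)

lemma sum_col_cycle (hMP : IsMPDigraph G) (F : Type) [Field F] {c : List G.E}
    (hc : IsCohCycle G c) (hlen : 2 ≤ c.length) :
    ∑ x ∈ c.toFinset, col G F x = 0 := by
  classical
  set D : G.E → V0 G → F := fun a v => if (inl (inl a) : V0 G) = v then 1 else 0 with hD
  have hshape : ∀ x ∈ c.toFinset, col G F x = D x - D (nxt G x) := by
    intro x hx
    have hxc : x ∈ c := List.mem_toFinset.mp hx
    have hl : ¬ G.s x = G.t x := cyc_nonloop hc hlen hxc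
    funext v
    rw [col, ends0_cyc G hl ⟨c, hc, hlen, hxc⟩]
    simp [hD]
  rw [Finset.sum_congr rfl hshape, Finset.sum_sub_distrib]
  have himg : c.toFinset.image (nxt G) = c.toFinset := by
    apply Finset.eq_of_subset_of_card_le
    · intro x hx
      obtain ⟨a, ha, rfl⟩ := Finset.mem_image.mp hx
      exact List.mem_toFinset.mpr (nxt_mem hMP.2 hc hlen (List.mem_toFinset.mp ha))
    · rw [Finset.card_image_of_injOn (fun a ha b hb h =>
        nxt_injOn hMP.2 hc hlen (List.mem_toFinset.mp ha) (List.mem_toFinset.mp hb) h)]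
  have hinj : ∀ x ∈ c.toFinset, ∀ y ∈ c.toFinset, nxt G x = nxt G y → x = y :=
    fun a ha b hb h =>
      nxt_injOn hMP.2 hc hlen (List.mem_toFinset.mp ha) (List.mem_toFinset.mp hb) h
  have hre : ∑ x ∈ c.toFinset, D (nxt G x) = ∑ x ∈ c.toFinset, D x := by
    have h3 : (∑ x ∈ c.toFinset.image (nxt G), D x) = ∑ x ∈ c.toFinset, D (nxt G x) :=
      Finset.sum_image hinj
    rw [himg] at h3
    exact h3.symm
  rw [hre, sub_self]

lemma exists_dep (hU : EdgeUnique G) (hMP : IsMPDigraph G) (F : Type) [Field F]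
    {m : Finset G.E} (hm : ¬ IsMultipath G m) :
    ∃ g : G.E → F, ∑ x ∈ m, g x • col G F x = 0 ∧ ∃ e ∈ m, g e ≠ 0 := by
  classical
  rcases notMP_cases hU hMP hm with ⟨e, he, hloop⟩ | ⟨e, he, f, hf, hef, hle, hends⟩ |
    ⟨c, hc, hlen, hsub⟩
  · refine ⟨fun x => if x = e then 1 else 0, ?_, e, he, by simp⟩
    rw [Finset.sum_eq_single e]
    · have hcol : col G F e = 0 := by
        funext v; rw [col, ends0_loop G hloop]; ring_nf; simp
      simp [hcol]
    · intro b _ hbe; simp [hbe]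
    · intro h; exact absurd he h
  · refine ⟨fun x => if x = e then 1 else if x = f then -1 else 0, ?_, e, he, by simp⟩
    have hcol : col G F e = col G F f := by
      funext v; rw [col, col, hends]
    have hsubset : ({e, f} : Finset G.E) ⊆ m := by
      intro x hx
      rcases Finset.mem_insert.mp hx with rfl | hx
      · exact he
      · rw [Finset.mem_singleton.mp hx]; exact hf
    rw [← Finset.sum_subset hsubset ?_]
    · rw [Finset.sum_pair hef]
      simp [hef, Ne.symm hef, hcol]
    · intro x _ hnx
      have h1 : x ≠ e := fun h => hnx (by simp [h])
      have h2 : x ≠ f := fun h => hnx (by simp [h])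
      simp [h1, h2]
  · refine ⟨fun x => if x ∈ c then 1 else 0, ?_, c.get ⟨0, cyc_pos_len hc⟩,
      hsub _ (fin_get_mem _ _), ?_⟩
    · show (∑ x ∈ m, (if x ∈ c then (1:F) else 0) • col G F x) = 0
      have hsubset : c.toFinset ⊆ m := fun x hx => hsub x (List.mem_toFinset.mp hx)
      have hz : ∀ x ∈ m, x ∉ c.toFinset → (if x ∈ c then (1:F) else 0) • col G F x = 0 := by
        intro x _ hnx
        have hxc : x ∉ c := fun h => hnx (List.mem_toFinset.mpr h)
        simp [hxc]
      rw [← Finset.sum_subset hsubset hz]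
      have hcg : (∑ x ∈ c.toFinset, (if x ∈ c then (1:F) else 0) • col G F x)
          = ∑ x ∈ c.toFinset, col G F x :=
        Finset.sum_congr rfl fun x hx => by simp [List.mem_toFinset.mp hx]
      rw [hcg]
      exact sum_col_cycle hMP F hc hlen
    · have hmem : c.get ⟨0, cyc_pos_len hc⟩ ∈ c := fin_get_mem _ _
      simp [hmem]

lemma linIndep_iff (hU : EdgeUnique G) (hMP : IsMPDigraph G) (F : Type) [Field F]
    (m : Finset G.E) :
    IsMultipath G m ↔
      LinearIndependent F (fun f : {x : G.E // x ∈ m} => col G F f.val) := by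
  classical
  rw [Fintype.linearIndependent_iff]
  constructor
  · intro hm g hg i
    set g' : G.E → F := fun x => if h : x ∈ m then g ⟨x, h⟩ else 0 with hg'
    have hconv : ∑ j : {x : G.E // x ∈ m}, g j • col G F j.val
        = ∑ x ∈ m, g' x • col G F x := by
      rw [Finset.univ_eq_attach, ← Finset.sum_attach m (fun x => g' x • col G F x)]
      exact Finset.sum_congr rfl fun j _ => by simp [hg']
    have h0 := sum_col_eq_zero hU hMP F m hm g' (hconv.symm.trans hg) i.val i.prop
    simpa [hg'] using h0
  · intro H
    by_contra hm
    obtain ⟨g, hsum, e, hem, hge⟩ := exists_dep hU hMP F hm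
    have hconv : ∑ j : {x : G.E // x ∈ m}, g j.val • col G F j.val
        = ∑ x ∈ m, g x • col G F x := by
      rw [Finset.univ_eq_attach]
      exact Finset.sum_attach m (fun x => g x • col G F x)
    exact hge (H (fun j => g j.val) (hconv.trans hsum) ⟨e, hem⟩)

lemma repOver (hU : EdgeUnique G) (hMP : IsMPDigraph G) (F : Type) [Field F] :
    RepOver G F := by
  classical
  refine ⟨Fintype.card (V0 G),
    fun i e => col G F e ((Fintype.equivFin (V0 G)).symm i), ?_⟩
  intro m
  rw [linIndep_iff hU hMP F m]
  have key := LinearMap.linearIndependent_iff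
    (v := fun f : {x : G.E // x ∈ m} => col G F f.val)
    (LinearEquiv.funCongrLeft F F
      (Fintype.equivFin (V0 G)).symm).toLinearMap
    (LinearEquiv.ker _)
  exact key.symm

/-- The undirected multigraph associated to an MP-digraph. -/
def MG (G : DiGraph) : Multigraph where
  V := V0 G
  E := G.E
  ends := fun e => s((ends0 G e).1, (ends0 G e).2)

end MPAux

/-- Every multipath matroid is regular (representable over
every field) and graphic (isomorphic to the matroid of subforests of a finite
undirected multigraph). -/
theorem multipath_matroid_regular_and_graphic (G : DiGraph) (hU : G.EdgeUnique)
    (hMP : G.IsMPDigraph) :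
    (∀ (F : Type) [Field F], DiGraph.RepOver G F) ∧
    (∃ (M : Multigraph) (φ : G.E ≃ M.E),
      ∀ m : Finset G.E, G.IsMultipath m ↔ ¬M.HasCycleIn (m.image φ)) := by
  constructor
  · intro F _
    exact MPAux.repOver hU hMP F
  · refine ⟨MPAux.MG G, Equiv.refl G.E, fun m => ?_⟩
    constructor
    · intro hm hcy
      obtain ⟨n, ed, vx, h1, h2, h3, h4, h5⟩ := hcy
      refine MPAux.no_cycle hU hMP m hm ⟨n, ed, vx, h1, h2, h3, fun i => ?_, h5⟩
      obtain ⟨a, ham, ha⟩ := Finset.mem_image.mp (h4 i)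
      have ha' : a = ed i := ha
      exact ha' ▸ ham
    · intro hnc
      by_contra hm
      obtain ⟨n, ed, vx, h1, h2, h3, h4, h5⟩ := MPAux.cycle_of_notMP hU hMP hm
      exact hnc ⟨n, ed, vx, h1, h2, h3, fun i => Finset.mem_image.mpr ⟨ed i, h4 i, rfl⟩, h5⟩
end
end
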